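/- arXiv:2305.02267 — 8 statements merged into one kernel-verified Lean document; each statement's English description precedes it below -/
import Mathlib

section
/- Let m be a positive integer, ζ a primitive m-th root of unity in ℂ, and define the cyclic quantum dilogarithm D_ζ(x) = ∏_{t=1}^{m-1} (1 - ζ^t x)^t. Then for all x ∈ ℂ with x^m ≠ 1, D_ζ(ζx)/D_ζ(x) = (1-x)^m/(1-x^m). -/
open Finset

/-- Cyclic quantum dilogarithm: `D_ζ(x) = ∏_{t=1}^{m-1} (1 - ζ^t x)^t`. -/
noncomputable def cyclicDilog (m : ℕ) (ζ x : ℂ) : ℂ :=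
  ∏ t ∈ Finset.Icc 1 (m - 1), (1 - ζ ^ t * x) ^ t

private lemma prod_Icc_one_eq_range {f : ℕ → ℂ} {m : ℕ} (hm : 0 < m) (h0 : f 0 = 1) :
    ∏ t ∈ Finset.Icc 1 (m - 1), f t = ∏ t ∈ Finset.range m, f t := by
  have h1 : m - 1 + 1 = m := Nat.succ_pred_eq_of_pos hm
  rw [← Finset.Ico_add_one_right_eq_Icc, h1, Finset.range_eq_Ico,
    Finset.prod_eq_prod_Ico_succ_bot hm, h0, one_mul]

theorem cyclicDilog_shift (m : ℕ) (hm : 0 < m) (ζ : ℂ)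
    (hζ : IsPrimitiveRoot ζ m) (x : ℂ) (hx : x ^ m ≠ 1) :
    cyclicDilog m ζ (ζ * x) / cyclicDilog m ζ x = (1 - x) ^ m / (1 - x ^ m) := by
  have hζm : ζ ^ m = 1 := hζ.pow_eq_one
  set g : ℕ → ℂ := fun t => 1 - ζ ^ t * x with hg
  have hfac : ∀ t : ℕ, g t ≠ 0 := by
    intro t h
    apply hx
    have h1 : ζ ^ t * x = 1 := (sub_eq_zero.mp h).symm
    have h2 : (ζ ^ t * x) ^ m = 1 := by rw [h1, one_pow]
    rwa [mul_pow, ← pow_mul, mul_comm t m, pow_mul, hζm, one_pow, one_mul] at h2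
  have hx1 : g 0 ≠ 0 := hfac 0
  have hgm : g m = g 0 := by simp [hg, hζm]
  have hxm : (1 - x ^ m : ℂ) ≠ 0 := sub_ne_zero.mpr (Ne.symm hx)
  have hprod : ∏ t ∈ Finset.range m, g t = 1 - x ^ m := by
    have h := X_pow_sub_C_eq_prod hζ hm (rfl : x ^ m = x ^ m)
    have h2 := congrArg (Polynomial.eval 1) h
    simpa [hg, Polynomial.eval_prod] using h2.symm
  -- shifted product of g
  have hshift : ∏ t ∈ Finset.range m, g (t + 1) = 1 - x ^ m := by
    have h1 : (∏ t ∈ Finset.range m, g (t + 1)) * g 0 = (∏ t ∈ Finset.range m, g t) * g m := by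
      rw [← Finset.prod_range_succ', Finset.prod_range_succ]
    rw [hgm] at h1
    have := mul_right_cancel₀ hx1 h1
    rw [this, hprod]
  set f : ℕ → ℂ := fun t => g t ^ t with hf
  have hDx : cyclicDilog m ζ x = ∏ t ∈ Finset.range m, f t := by
    unfold cyclicDilog
    exact prod_Icc_one_eq_range hm (by simp [hf])
  have hDζx : cyclicDilog m ζ (ζ * x) = ∏ t ∈ Finset.range m, g (t + 1) ^ t := by
    unfold cyclicDilog
    rw [prod_Icc_one_eq_range hm (by simp)]
    refine Finset.prod_congr rfl fun t _ => ?_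
    rw [hg]
    ring_nf
  have hDxne : cyclicDilog m ζ x ≠ 0 := by
    rw [hDx]
    exact Finset.prod_ne_zero_iff.mpr fun t _ => pow_ne_zero _ (hfac t)
  -- key identity
  have hkey : cyclicDilog m ζ (ζ * x) * (1 - x ^ m) = (1 - x) ^ m * cyclicDilog m ζ x := by
    have h1 : cyclicDilog m ζ (ζ * x) * (∏ t ∈ Finset.range m, g (t + 1)) =
        ∏ t ∈ Finset.range m, f (t + 1) := by
      rw [hDζx, ← Finset.prod_mul_distrib]
      exact Finset.prod_congr rfl fun t _ => (pow_succ _ _).symm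
    have h2 : (∏ t ∈ Finset.range m, f (t + 1)) * f 0 =
        (∏ t ∈ Finset.range m, f t) * f m := by
      rw [← Finset.prod_range_succ', Finset.prod_range_succ]
    have hf0 : f 0 = 1 := by simp [hf]
    have hfm : f m = (1 - x) ^ m := by simp [hf, hg, hζm]
    rw [hf0, mul_one, hfm] at h2
    rw [← hshift, h1, h2, ← hDx]
    ring
  rw [div_eq_div_iff hDxne hxm]
  linear_combination hkey
end

section
/- Let m, p, q be positive integers with p, q coprime to m and pq ≡ 1 (mod m). For each residue r with 1 ≤ r ≤ m-1, the sets M(r) = {t ∈ [1, p-1] : ⌊mt/p⌋ + 1 = r} and M'(r) = {t ∈ [1, p-1] : tq ≡ r (mod m)} have the same cardinality. -/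
open Finset

theorem card_floor_eq_card_residue (m p q : ℕ) (hm : 0 < m) (hp : 0 < p) (hq : 0 < q)
    (hpm : Nat.Coprime p m) (hqm : Nat.Coprime q m)
    (hpq : p * q ≡ 1 [MOD m]) (r : ℕ) (hr1 : 1 ≤ r) (hrm : r ≤ m - 1) :
    ((Finset.Icc 1 (p - 1)).filter (fun t => m * t / p + 1 = r)).card =
    ((Finset.Icc 1 (p - 1)).filter (fun t => t * q ≡ r [MOD m])).card := by
  have hrpp : (r - 1) * p + p = r * p := by
    conv_rhs => rw [← Nat.sub_add_cancel hr1]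
    ring
  have hmpp : (m - 1) * p + p = m * p := by
    conv_rhs => rw [← Nat.sub_add_cancel hm]
    ring
  have hrm' : r * p ≤ (m - 1) * p := Nat.mul_le_mul_right p hrm
  apply Finset.card_bij (fun t _ => r * p - m * t)
  · -- membership
    intro t ht
    simp only [mem_filter, mem_Icc] at ht ⊢
    obtain ⟨⟨ht1, ht2⟩, hdiv⟩ := ht
    have hub : m * t < r * p := by
      have : m * t / p < r := by omega
      exact (Nat.div_lt_iff_lt_mul hp).mp this
    have hlb : (r - 1) * p ≤ m * t := by
      have : r - 1 ≤ m * t / p := by omega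
      exact (Nat.le_div_iff_mul_le hp).mp this
    have hne : m * t ≠ (r - 1) * p := by
      intro h
      have hd : m ∣ (r - 1) * p := ⟨t, h.symm⟩
      have hdr : m ∣ (r - 1) := hpm.symm.dvd_of_dvd_mul_right hd
      have h0 : r - 1 = 0 := Nat.eq_zero_of_dvd_of_lt hdr (by omega)
      rw [h0, zero_mul] at h
      rcases Nat.mul_eq_zero.mp h with h' | h' <;> omega
    refine ⟨⟨by omega, by omega⟩, ?_⟩
    have h1 : (r * p - m * t) ≡ r * p [MOD m] := by
      refine (Nat.modEq_iff_dvd' (by omega)).mpr ?_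
      have h2 : r * p - (r * p - m * t) = m * t := by omega
      rw [h2]; exact Dvd.intro t rfl
    calc (r * p - m * t) * q ≡ r * p * q [MOD m] := h1.mul_right q
      _ = r * (p * q) := by ring
      _ ≡ r * 1 [MOD m] := Nat.ModEq.mul_left r hpq
      _ = r := by ring
  · -- injective
    intro t1 h1 t2 h2 heq
    simp only [mem_filter, mem_Icc] at h1 h2
    have hu1 : m * t1 < r * p := by
      have : m * t1 / p < r := by omega
      exact (Nat.div_lt_iff_lt_mul hp).mp this
    have hu2 : m * t2 < r * p := by
      have : m * t2 / p < r := by omega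
      exact (Nat.div_lt_iff_lt_mul hp).mp this
    have : m * t1 = m * t2 := by omega
    exact Nat.eq_of_mul_eq_mul_left hm this
  · -- surjective
    intro u hu
    simp only [mem_filter, mem_Icc] at hu
    obtain ⟨⟨hu1, hu2⟩, hmod⟩ := hu
    have hurp : u ≡ r * p [MOD m] := by
      calc u = u * 1 := by ring
        _ ≡ u * (p * q) [MOD m] := (Nat.ModEq.mul_left u hpq).symm
        _ = u * q * p := by ring
        _ ≡ r * p [MOD m] := hmod.mul_right p
    have hule : u ≤ r * p := by
      have : p ≤ r * p := Nat.le_mul_of_pos_left p hr1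
      omega
    obtain ⟨k, hk⟩ := (Nat.modEq_iff_dvd' hule).mp hurp
    have hmk1 : 1 ≤ m * k := by
      have : p ≤ r * p := Nat.le_mul_of_pos_left p hr1
      omega
    have hklt : k < p := by
      have h1 : m * k < m * p := by omega
      exact Nat.lt_of_mul_lt_mul_left h1
    have hk1 : 1 ≤ k := by
      rcases Nat.eq_zero_or_pos k with h | h
      · rw [h, Nat.mul_zero] at hmk1; omega
      · exact h
    have hlow : (r - 1) * p ≤ m * k := by omega
    have hhigh : m * k < r * p := by omega
    have hdivk : m * k / p = r - 1 := by
      apply Nat.le_antisymm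
      · have := (Nat.div_lt_iff_lt_mul hp).mpr hhigh
        omega
      · exact (Nat.le_div_iff_mul_le hp).mpr hlow
    refine ⟨k, ?_, ?_⟩
    · simp only [mem_filter, mem_Icc]
      exact ⟨⟨hk1, by omega⟩, by omega⟩
    · omega
end

section
/- Let m be a positive integer, ζ a primitive m-th root of unity, and p, q positive integers coprime to m with pq ≡ 1 (mod m). Then for x ∈ ℂ with x^m ≠ 1, D_ζ(x)^p / D_{ζ^q}(x) = ((1-x^m)^{p-1} · ∏_{t=1}^{p-1} 1/(x;ζ)_{⌊mt/p⌋+1})^m, where (x;ζ)_n = ∏_{i=0}^{n-1} (1 - ζ^i x) and D_ζ(x) = ∏_{t=1}^{m-1}(1-ζ^t x)^t. -/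
open Finset

/-- q-Pochhammer symbol `(x;ζ)_n = ∏_{i=0}^{n-1} (1 - ζ^i x)`. -/
noncomputable def qPoch (ζ x : ℂ) (n : ℕ) : ℂ :=
  ∏ i ∈ Finset.range n, (1 - ζ ^ i * x)

lemma prod_range_one_sub_pow_mul (m : ℕ) (hm : 0 < m) {ζ : ℂ} (hζ : IsPrimitiveRoot ζ m)
    (x : ℂ) : ∏ i ∈ Finset.range m, (1 - ζ ^ i * x) = 1 - x ^ m := by
  have hinj := hζ.injOn_pow
  have himg : Polynomial.nthRootsFinset m (1 : ℂ) = (Finset.range m).image (ζ ^ ·) := by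
    refine (Finset.eq_of_subset_of_card_le ?_ ?_).symm
    · intro w hw
      simp only [Finset.mem_image, Finset.mem_range] at hw
      obtain ⟨i, _, rfl⟩ := hw
      refine (Polynomial.mem_nthRootsFinset hm (1 : ℂ)).2 ?_
      rw [← pow_mul, mul_comm, pow_mul, hζ.pow_eq_one, one_pow]
    · rw [hζ.card_nthRootsFinset, Finset.card_image_of_injOn hinj, Finset.card_range]
  have h := hζ.pow_sub_pow_eq_prod_sub_mul (x := (1 : ℂ)) (y := x) hm
  rw [one_pow, himg, Finset.prod_image (fun a ha b hb hab => hinj ha hb hab)] at h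
  exact h.symm

theorem cyclicDilog_change_of_zeta (m p q : ℕ) (hm : 0 < m) (hp : 0 < p) (hq : 0 < q)
    (hpm : Nat.Coprime p m) (hqm : Nat.Coprime q m) (hpq : p * q ≡ 1 [MOD m])
    (ζ : ℂ) (hζ : IsPrimitiveRoot ζ m) (x : ℂ) (hx : x ^ m ≠ 1) :
    cyclicDilog m ζ x ^ p / cyclicDilog m (ζ ^ q) x =
    ((1 - x ^ m) ^ (p - 1) *
      ∏ t ∈ Finset.Icc 1 (p - 1), (qPoch ζ x (m * t / p + 1))⁻¹) ^ m := by
  have hζm : ζ ^ m = 1 := hζ.pow_eq_one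
  -- ζ to a power mod m
  have hpowmod : ∀ a : ℕ, ζ ^ (a % m) = ζ ^ a := by
    intro a
    conv_rhs => rw [← Nat.mod_add_div a m]
    rw [pow_add, pow_mul, hζm, one_pow, mul_one]
  -- each factor is nonzero
  have hne : ∀ s : ℕ, (1 : ℂ) - ζ ^ s * x ≠ 0 := by
    intro s h
    apply hx
    have h1 : ζ ^ s * x = 1 := by
      have := sub_eq_zero.mp h
      linear_combination -this
    calc x ^ m = (ζ ^ m) ^ s * x ^ m := by rw [hζm, one_pow, one_mul]
      _ = (ζ ^ s * x) ^ m := by ring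
      _ = 1 := by rw [h1, one_pow]
  have hq0 : ∀ n : ℕ, qPoch ζ x n ≠ 0 := by
    intro n
    exact Finset.prod_ne_zero_iff.mpr fun i _ => hne i
  have hxm : (1 : ℂ) - x ^ m ≠ 0 := sub_ne_zero.mpr (Ne.symm hx)
  -- step A : reindex the denominator
  have hA : cyclicDilog m (ζ ^ q) x
      = ∏ s ∈ Finset.Icc 1 (m - 1), (1 - ζ ^ s * x) ^ (p * s % m) := by
    unfold cyclicDilog
    refine Finset.prod_nbij' (fun t => q * t % m) (fun s => p * s % m) ?_ ?_ ?_ ?_ ?_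
    · intro t ht
      rw [Finset.mem_Icc] at ht ⊢
      have h1 : q * t % m < m := Nat.mod_lt _ hm
      have h2 : q * t % m ≠ 0 := by
        intro h0
        have hdvd : m ∣ q * t := Nat.dvd_of_mod_eq_zero h0
        have hdt : m ∣ t := (Nat.Coprime.dvd_of_dvd_mul_left (hqm.symm) hdvd)
        have := Nat.le_of_dvd (by omega) hdt
        omega
      show 1 ≤ q * t % m ∧ q * t % m ≤ m - 1
      exact ⟨by omega, by omega⟩
    · intro s hs
      rw [Finset.mem_Icc] at hs ⊢
      have h1 : p * s % m < m := Nat.mod_lt _ hm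
      have h2 : p * s % m ≠ 0 := by
        intro h0
        have hdvd : m ∣ p * s := Nat.dvd_of_mod_eq_zero h0
        have hds : m ∣ s := (Nat.Coprime.dvd_of_dvd_mul_left (hpm.symm) hdvd)
        have := Nat.le_of_dvd (by omega) hds
        omega
      show 1 ≤ p * s % m ∧ p * s % m ≤ m - 1
      exact ⟨by omega, by omega⟩
    · intro t ht
      rw [Finset.mem_Icc] at ht
      have : p * (q * t % m) ≡ t [MOD m] := by
        calc p * (q * t % m) ≡ p * (q * t) [MOD m] :=
              Nat.ModEq.mul_left p (Nat.mod_modEq (q * t) m)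
          _ = p * q * t := by ring
          _ ≡ 1 * t [MOD m] := Nat.ModEq.mul_right t hpq
          _ = t := by ring
      have ht' : t % m = t := Nat.mod_eq_of_lt (by omega)
      calc p * (q * t % m) % m = t % m := this
        _ = t := ht'
    · intro s hs
      rw [Finset.mem_Icc] at hs
      have : q * (p * s % m) ≡ s [MOD m] := by
        calc q * (p * s % m) ≡ q * (p * s) [MOD m] :=
              Nat.ModEq.mul_left q (Nat.mod_modEq (p * s) m)
          _ = p * q * s := by ring
          _ ≡ 1 * s [MOD m] := Nat.ModEq.mul_right s hpq
          _ = s := by ring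
      have hs' : s % m = s := Nat.mod_eq_of_lt (by omega)
      calc q * (p * s % m) % m = s % m := this
        _ = s := hs'
    · intro t ht
      rw [Finset.mem_Icc] at ht
      have hexp : p * (q * t % m) % m = t := by
        have hmod : p * (q * t % m) ≡ t [MOD m] := by
          calc p * (q * t % m) ≡ p * (q * t) [MOD m] :=
                Nat.ModEq.mul_left p (Nat.mod_modEq (q * t) m)
            _ = p * q * t := by ring
            _ ≡ 1 * t [MOD m] := Nat.ModEq.mul_right t hpq
            _ = t := by ring
        calc p * (q * t % m) % m = t % m := hmod
          _ = t := Nat.mod_eq_of_lt (by omega)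
      rw [hexp, hpowmod (q * t), pow_mul]
  -- step B : the numerator
  have hB : cyclicDilog m ζ x ^ p
      = ∏ s ∈ Finset.Icc 1 (m - 1), (1 - ζ ^ s * x) ^ (p * s) := by
    unfold cyclicDilog
    rw [← Finset.prod_pow]
    exact Finset.prod_congr rfl fun s _ => by rw [mul_comm p s, pow_mul]
  -- step C : the quotient
  have hC : cyclicDilog m ζ x ^ p / cyclicDilog m (ζ ^ q) x
      = (∏ s ∈ Finset.Icc 1 (m - 1), (1 - ζ ^ s * x) ^ (p * s / m)) ^ m := by
    rw [hA, hB, ← Finset.prod_div_distrib, ← Finset.prod_pow]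
    refine Finset.prod_congr rfl fun s _ => ?_
    rw [div_eq_mul_inv, ← pow_sub₀ _ (hne s) (Nat.mod_le _ _)]
    have hd : p * s / m * m + p * s % m = p * s := Nat.div_add_mod' (p * s) m
    rw [← pow_mul]
    congr 1
    omega
  -- inner product over a tail interval
  have htail : ∀ k : ℕ, 1 ≤ k → k ≤ m →
      ∏ s ∈ Finset.Icc k (m - 1), (1 - ζ ^ s * x)
        = (1 - x ^ m) * (qPoch ζ x k)⁻¹ := by
    intro k hk1 hkm
    have hIcc : Finset.Icc k (m - 1) = Finset.Ico k m := by
      rw [← Finset.Ico_add_one_right_eq_Icc]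
      congr 1
      omega
    rw [hIcc, eq_mul_inv_iff_mul_eq₀ (hq0 k), mul_comm]
    have : qPoch ζ x k = ∏ i ∈ Finset.Ico 0 k, (1 - ζ ^ i * x) := by
      unfold qPoch
      rw [Finset.range_eq_Ico]
    rw [this, Finset.prod_Ico_consecutive _ (Nat.zero_le k) hkm, ← Finset.range_eq_Ico]
    exact prod_range_one_sub_pow_mul m hm hζ x
  -- step D : the core combinatorial identity
  have hD : ∏ s ∈ Finset.Icc 1 (m - 1), (1 - ζ ^ s * x) ^ (p * s / m)
      = (1 - x ^ m) ^ (p - 1) *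
        ∏ t ∈ Finset.Icc 1 (p - 1), (qPoch ζ x (m * t / p + 1))⁻¹ := by
    have step1 : ∀ s ∈ Finset.Icc 1 (m - 1),
        (1 - ζ ^ s * x) ^ (p * s / m)
          = ∏ _t ∈ Finset.Icc 1 (p * s / m), (1 - ζ ^ s * x) := by
      intro s _
      rw [Finset.prod_const, Nat.card_Icc, Nat.add_sub_cancel]
    rw [Finset.prod_congr rfl step1]
    have key : ∀ s t : ℕ,
        (s ∈ Finset.Icc 1 (m - 1) ∧ t ∈ Finset.Icc 1 (p * s / m)) ↔
        (s ∈ Finset.Icc (m * t / p + 1) (m - 1) ∧ t ∈ Finset.Icc 1 (p - 1)) := by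
      intro s t
      simp only [Finset.mem_Icc]
      constructor
      · rintro ⟨⟨hs1, hs2⟩, ht1, ht2⟩
        have htm : t * m ≤ p * s := (Nat.le_div_iff_mul_le hm).mp ht2
        have hne' : t * m ≠ p * s := by
          intro h
          have hdvd : m ∣ p * s := ⟨t, by rw [← h, mul_comm]⟩
          have hds : m ∣ s := Nat.Coprime.dvd_of_dvd_mul_left (hpm.symm) hdvd
          have := Nat.le_of_dvd (by omega) hds
          omega
        have hstrict : t * m < p * s := lt_of_le_of_ne htm hne'
        have hdiv : m * t / p < s := by
          rw [Nat.div_lt_iff_lt_mul hp]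
          calc m * t = t * m := mul_comm m t
            _ < p * s := hstrict
            _ = s * p := mul_comm p s
        have htp : t < p := by
          have h1 : p * s ≤ p * (m - 1) := Nat.mul_le_mul_left p hs2
          have h2 : p * (m - 1) < p * m := (Nat.mul_lt_mul_left hp).mpr (by omega)
          exact Nat.lt_of_mul_lt_mul_right (by omega : t * m < p * m)
        exact ⟨⟨by omega, hs2⟩, ht1, by omega⟩
      · rintro ⟨⟨hs1, hs2⟩, ht1, ht2⟩
        have hdiv : m * t / p < s := by omega
        have hstrict : m * t < s * p := (Nat.div_lt_iff_lt_mul hp).mp hdiv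
        have hle : t ≤ p * s / m := by
          rw [Nat.le_div_iff_mul_le hm]
          calc t * m = m * t := mul_comm t m
            _ ≤ s * p := le_of_lt hstrict
            _ = p * s := mul_comm s p
        have hs1' : 1 ≤ s := by
          rcases Nat.eq_zero_or_pos s with h | h
          · subst h; omega
          · exact h
        exact ⟨⟨hs1', hs2⟩, ht1, hle⟩
    rw [Finset.prod_comm' key]
    have step2 : ∀ t ∈ Finset.Icc 1 (p - 1),
        ∏ s ∈ Finset.Icc (m * t / p + 1) (m - 1), (1 - ζ ^ s * x)
          = (1 - x ^ m) * (qPoch ζ x (m * t / p + 1))⁻¹ := by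
      intro t ht
      rw [Finset.mem_Icc] at ht
      refine htail (m * t / p + 1) (Nat.le_add_left 1 _) ?_
      have hlt : m * t / p < m := by
        rw [Nat.div_lt_iff_lt_mul hp]
        calc m * t < m * p := (Nat.mul_lt_mul_left hm).mpr (by omega)
          _ = m * p := rfl
      omega
    rw [Finset.prod_congr rfl step2, Finset.prod_mul_distrib, Finset.prod_const, Nat.card_Icc, Nat.add_sub_cancel]
  rw [hC, hD]
end

section
/- Let m be a positive integer, ζ a primitive m-th root of unity, p, q positive integers coprime to m with pq ≡ 1 (mod m), and x ∈ ℂ with x^m ≠ 1. Then ∏_{t=1}^{m-1}(1 - ζ^{qt}x)^t = ∏_{t=1}^{m-1}(1 - ζ^t x)^{m·(pt/m - ⌊pt/m⌋)}, i.e., D_{ζ^q}(x) = ∏_{t=1}^{m-1}(1-ζ^t x)^{pt - m⌊pt/m⌋}. -/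
open Finset

theorem cyclicDilog_pow_q_eq (m p q : ℕ) (hm : 0 < m) (hp : 0 < p) (hq : 0 < q)
    (hpm : Nat.Coprime p m) (hqm : Nat.Coprime q m) (hpq : p * q ≡ 1 [MOD m])
    (ζ : ℂ) (hζ : IsPrimitiveRoot ζ m) (x : ℂ) (hx : x ^ m ≠ 1) :
    ∏ t ∈ Finset.Icc 1 (m - 1), (1 - ζ ^ (q * t) * x) ^ t =
    ∏ t ∈ Finset.Icc 1 (m - 1), (1 - ζ ^ t * x) ^ (p * t - m * (p * t / m)) := by
  have hζm : ζ ^ m = 1 := hζ.pow_eq_one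
  have hmod : ∀ t, p * t - m * (p * t / m) = (p * t) % m := by
    intro t
    rw [Nat.mod_def]
  -- membership lemma
  have hmem : ∀ (r : ℕ), Nat.Coprime r m → ∀ t ∈ Finset.Icc 1 (m - 1),
      (r * t) % m ∈ Finset.Icc 1 (m - 1) := by
    intro r hr t ht
    simp only [Finset.mem_Icc] at ht ⊢
    constructor
    · rcases Nat.eq_zero_or_pos ((r * t) % m) with h0 | h0
      · exfalso
        have hdvd : m ∣ r * t := Nat.dvd_of_mod_eq_zero h0
        have : m ∣ t := (Nat.Coprime.dvd_of_dvd_mul_left (Nat.Coprime.symm hr) hdvd)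
        have := Nat.le_of_dvd (by omega) this
        omega
      · exact h0
    · have := Nat.mod_lt (r * t) hm
      omega
  have hinv : ∀ (r s : ℕ), r * s ≡ 1 [MOD m] → ∀ t ∈ Finset.Icc 1 (m - 1),
      (r * ((s * t) % m)) % m = t := by
    intro r s hrs t ht
    simp only [Finset.mem_Icc] at ht
    have h1 : r * ((s * t) % m) ≡ r * (s * t) [MOD m] :=
      Nat.ModEq.mul_left r (Nat.mod_modEq (s * t) m)
    have h2 : r * (s * t) ≡ 1 * t [MOD m] := by
      rw [← mul_assoc]
      exact Nat.ModEq.mul_right t hrs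
    have h3 : r * ((s * t) % m) ≡ t [MOD m] := by
      simpa using h1.trans h2
    have h4 : (r * ((s * t) % m)) % m = t % m := h3
    rw [h4, Nat.mod_eq_of_lt (by omega)]
  have hqp : q * p ≡ 1 [MOD m] := by rwa [mul_comm] at hpq
  simp only [hmod]
  refine Finset.prod_nbij' (fun t => (q * t) % m) (fun t => (p * t) % m)
    (fun t ht => hmem q hqm t ht) (fun t ht => hmem p hpm t ht)
    (fun t ht => hinv p q hpq t ht) (fun t ht => hinv q p hqp t ht) ?_
  intro t ht
  have e1 : ζ ^ ((q * t) % m) = ζ ^ (q * t) := by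
    conv_rhs => rw [pow_eq_pow_mod (q * t) hζm]
  rw [e1, hinv p q hpq t ht]
end

section
/- Let m be a positive integer, ζ a primitive m-th root of unity, p, q positive integers with pq ≡ 1 (mod m), and e an integer. Then for x ∈ ℂ such that all factors are nonzero, ∏_{t=0}^{p-1} (ζ^{tq} x; ζ)_e appearing in denominators satisfies ∏_{t=0}^{p-1} (ζ^{tq}x; ζ)_e = (x; ζ^q)_{pe}, where (x;ζ)_n = ∏_{i=0}^{n-1}(1-ζ^i x). -/
open Finset

theorem prod_qPoch_shift (m p q : ℕ) (hm : 0 < m) (hp : 0 < p) (hq : 0 < q)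
    (hpq : p * q ≡ 1 [MOD m]) (ζ : ℂ) (hζ : IsPrimitiveRoot ζ m)
    (e : ℕ) (x : ℂ) :
    ∏ t ∈ Finset.range p, qPoch ζ (ζ ^ (t * q) * x) e = qPoch (ζ ^ q) x (p * e) := by
  have h1 : ζ ^ (p * q) = ζ ^ 1 := by
    obtain ⟨k, hk⟩ := (Nat.modEq_iff_dvd' (Nat.one_le_iff_ne_zero.mpr (by positivity))).mp hpq.symm
    have hpq' : p * q = m * k + 1 :=
      (Nat.sub_eq_iff_eq_add (Nat.one_le_iff_ne_zero.mpr (by positivity))).mp hk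
    rw [hpq', pow_add, pow_mul, hζ.pow_eq_one, one_pow, one_mul]
  simp only [qPoch]
  rw [← Finset.prod_product']
  refine Finset.prod_nbij' (fun a => a.1 + p * a.2) (fun b => (b % p, b / p)) ?_ ?_ ?_ ?_ ?_
  · rintro ⟨t, i⟩ h
    simp only [Finset.mem_product, Finset.mem_range] at h ⊢
    calc t + p * i < p + p * i := by omega
      _ = p * (i + 1) := by ring
      _ ≤ p * e := Nat.mul_le_mul_left p h.2
  · intro b hb
    simp only [Finset.mem_range] at hb
    simp only [Finset.mem_product, Finset.mem_range]
    exact ⟨Nat.mod_lt _ hp, Nat.div_lt_of_lt_mul hb⟩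
  · rintro ⟨t, i⟩ h
    simp only [Finset.mem_product, Finset.mem_range] at h
    simp [Nat.add_mul_mod_self_left, Nat.mod_eq_of_lt h.1,
      Nat.add_mul_div_left _ _ hp, Nat.div_eq_of_lt h.1]
  · intro b hb
    exact Nat.mod_add_div b p
  · rintro ⟨t, i⟩ h
    simp only
    rw [← pow_mul, show q * (t + p * i) = t * q + (p * q) * i by ring, pow_add, pow_mul ζ (p * q) i, h1,
      pow_one]
    ring
end

section
/- Let N be a positive integer, A ∈ ℚ^{N×N}, and D = diag(d_1,...,d_N) with positive integers d_i, such that AD is symmetric positive definite. Then there exists a unique solution (z_1,...,z_N) ∈ (0,1)^N of the Nahm equation 1 - z_i = ∏_{j=1}^N z_j^{A_{ij}} for all i. -/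
open Finset Real MeasureTheory Set Filter

noncomputable section NahmAux

/-- the function `t ↦ log (1 - exp (-t))`. -/
def nahmH (t : ℝ) : ℝ := Real.log (1 - Real.exp (-t))

lemma nahm_pos {t : ℝ} (ht : 0 < t) : 0 < 1 - Real.exp (-t) := by
  have : Real.exp (-t) < 1 := by
    rw [Real.exp_lt_one_iff]; linarith
  linarith

lemma nahm_lt_one {t : ℝ} (ht : 0 < t) : 1 - Real.exp (-t) < 1 := by
  have := Real.exp_pos (-t); linarith

lemma nahmH_neg {t : ℝ} (ht : 0 < t) : nahmH t < 0 :=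
  Real.log_neg (nahm_pos ht) (nahm_lt_one ht)

lemma nahmH_nonpos {t : ℝ} (ht : 0 ≤ t) : nahmH t ≤ 0 := by
  rcases eq_or_lt_of_le ht with h | h
  · simp [nahmH, ← h]
  · exact (nahmH_neg h).le

lemma nahmH_mono : MonotoneOn nahmH (Set.Ioi 0) := by
  intro s hs t ht hst
  apply Real.log_le_log (nahm_pos hs)
  have := Real.exp_le_exp.2 (neg_le_neg hst)
  linarith

lemma nahmH_continuousOn : ContinuousOn nahmH (Set.Ioi 0) := by
  apply ContinuousOn.log
  · exact (continuous_const.sub (Real.continuous_exp.comp continuous_neg)).continuousOn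
  · intro t ht; exact (nahm_pos ht).ne'

lemma nahmH_continuousAt {t : ℝ} (ht : 0 < t) : ContinuousAt nahmH t := by
  have : ∀ᶠ s in nhds t, s ∈ Set.Ioi (0:ℝ) := (isOpen_Ioi.eventually_mem ht)
  exact (nahmH_continuousOn.continuousAt (isOpen_Ioi.mem_nhds ht))

/-- bounds near 0 : `s/2 ≤ 1 - exp (-s) ≤ s` for `s ∈ (0,1]`. -/
lemma nahm_one_sub_exp_le {s : ℝ} (hs : 0 ≤ s) : 1 - Real.exp (-s) ≤ s := by
  have := Real.add_one_le_exp (-s)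
  linarith

lemma nahm_half_le_one_sub_exp {s : ℝ} (hs0 : 0 < s) (hs1 : s ≤ 1) :
    s / 2 ≤ 1 - Real.exp (-s) := by
  have h1 : Real.exp (-s) ≤ 1 / (1 + s) := by
    rw [Real.exp_neg, inv_eq_one_div]
    apply one_div_le_one_div_of_le (by linarith)
    have := Real.add_one_le_exp s
    linarith
  have h2 : 1 / (1 + s) ≤ 1 - s / 2 := by
    rw [div_le_iff₀ (by linarith)]
    nlinarith
  linarith

lemma nahmH_abs_bound {s : ℝ} (hs0 : 0 < s) (hs1 : s ≤ 1) :
    |nahmH s| ≤ -Real.log s + Real.log 2 := by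
  have hpos := nahm_pos hs0
  have hub : nahmH s ≤ Real.log s := by
    apply Real.log_le_log hpos (nahm_one_sub_exp_le hs0.le)
  have hlb : Real.log s - Real.log 2 ≤ nahmH s := by
    have := Real.log_le_log (by positivity : (0:ℝ) < s / 2) (nahm_half_le_one_sub_exp hs0 hs1)
    rwa [Real.log_div hs0.ne' two_ne_zero] at this
  rw [abs_le]
  constructor
  · have hls : Real.log s ≤ 0 := Real.log_nonpos hs0.le hs1
    linarith
  · have hl2 : 0 ≤ Real.log 2 := Real.log_nonneg one_le_two
    have hls : Real.log s ≤ 0 := Real.log_nonpos hs0.le hs1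
    linarith

lemma integrableOn_neg_log : IntegrableOn (fun s : ℝ => -Real.log s) (Set.Ioc 0 1) := by
  have h := intervalIntegral.integrableOn_deriv_of_nonneg
    (g := fun x : ℝ => x - x * Real.log x) (g' := fun s : ℝ => -Real.log s) (a := 0) (b := 1)
    ?_ ?_ ?_
  · simpa using h
  · exact (continuous_id.sub Real.continuous_mul_log).continuousOn
  · intro x hx
    have h1 : HasDerivAt (fun x : ℝ => x * Real.log x) (Real.log x + 1) x :=
      Real.hasDerivAt_mul_log hx.1.ne'
    have h2 := (hasDerivAt_id' x).sub h1
    rw [show (1:ℝ) - (Real.log x + 1) = -Real.log x by ring] at h2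
    exact h2
  · intro x hx
    simp only [neg_nonneg]
    exact Real.log_nonpos hx.1.le hx.2.le

lemma integrableOn_nahmH_Ioc01 : IntegrableOn nahmH (Set.Ioc 0 1) := by
  apply Integrable.mono' (g := fun s => -Real.log s + Real.log 2)
  · exact integrableOn_neg_log.add (integrableOn_const (by simp [Real.volume_Ioc]))
  · apply (nahmH_continuousOn.mono ?_).aestronglyMeasurable measurableSet_Ioc
    exact fun x hx => hx.1
  · filter_upwards [ae_restrict_mem measurableSet_Ioc] with s hs
    exact nahmH_abs_bound hs.1 hs.2

lemma nahmH_intervalIntegrable {a b : ℝ} (ha : 0 ≤ a) (hb : 0 ≤ b) :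
    IntervalIntegrable nahmH volume a b := by
  have key : ∀ c : ℝ, 0 ≤ c → IntervalIntegrable nahmH volume 0 c := by
    intro c hc
    rcases le_total c 1 with h1 | h1
    · rw [intervalIntegrable_iff_integrableOn_Ioc_of_le hc]
      exact integrableOn_nahmH_Ioc01.mono (Set.Ioc_subset_Ioc le_rfl h1) le_rfl
    · have i1 : IntervalIntegrable nahmH volume 0 1 := by
        rw [intervalIntegrable_iff_integrableOn_Ioc_of_le one_pos.le]
        exact integrableOn_nahmH_Ioc01
      have i2 : IntervalIntegrable nahmH volume 1 c := by
        apply ContinuousOn.intervalIntegrable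
        apply nahmH_continuousOn.mono
        intro x hx
        rw [Set.uIcc_of_le h1] at hx
        exact lt_of_lt_of_le one_pos hx.1
      exact i1.trans i2
  exact (key a ha).symm.trans (key b hb)

/-- the primitive of `nahmH` starting at `0`. -/
def nahmG (t : ℝ) : ℝ := ∫ s in (0:ℝ)..t, nahmH s

lemma nahmG_zero : nahmG 0 = 0 := intervalIntegral.integral_same

lemma nahmG_hasDerivAt {t : ℝ} (ht : 0 < t) : HasDerivAt nahmG (nahmH t) t := by
  apply intervalIntegral.integral_hasDerivAt_right
    (nahmH_intervalIntegrable le_rfl ht.le)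
  · exact (nahmH_continuousOn.stronglyMeasurableAtFilter isOpen_Ioi t ht)
  · exact nahmH_continuousAt ht

lemma nahmG_continuousOn : ContinuousOn nahmG (Set.Ici 0) := by
  intro t ht
  have h1 : ContinuousOn nahmG (Set.uIcc 0 (t + 1)) := by
    apply intervalIntegral.continuousOn_primitive_interval'
      (nahmH_intervalIntegrable le_rfl (by simp at ht ⊢; linarith)) left_mem_uIcc
  have ht1 : t ∈ Set.uIcc 0 (t+1) := by
    rw [Set.uIcc_of_le (by simp at ht; linarith)]
    refine ⟨by simp at ht; linarith, by simp at ht; linarith⟩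
  apply (h1 t ht1).mono_of_mem_nhdsWithin
  have : Set.uIcc 0 (t+1) = Set.Icc 0 (t+1) := Set.uIcc_of_le (by simp at ht; linarith)
  rw [this]
  rw [mem_nhdsWithin_iff_exists_mem_nhds_inter]
  refine ⟨Set.Iio (t+1), Iio_mem_nhds (by linarith), ?_⟩
  intro x hx
  exact ⟨hx.2, hx.1.le⟩


lemma nahmG_sub {a b : ℝ} (ha : 0 ≤ a) (hb : 0 ≤ b) :
    nahmG b - nahmG a = ∫ s in a..b, nahmH s := by
  have := intervalIntegral.integral_add_adjacent_intervals
    (nahmH_intervalIntegrable le_rfl ha) (nahmH_intervalIntegrable ha hb)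
  unfold nahmG
  linarith

lemma nahmG_antitoneOn : AntitoneOn nahmG (Set.Ici 0) := by
  intro a ha b hb hab
  simp only [Set.mem_Ici] at ha hb
  have h1 : nahmG b - nahmG a = ∫ s in a..b, nahmH s := nahmG_sub ha hb
  have h2 : (0:ℝ) ≤ ∫ s in a..b, -nahmH s := by
    apply intervalIntegral.integral_nonneg hab
    intro u hu
    simp only [neg_nonneg]
    exact nahmH_nonpos (le_trans ha hu.1)
  rw [intervalIntegral.integral_neg] at h2
  linarith

lemma nahmG_le_mul {t : ℝ} (ht : 0 < t) : nahmG t ≤ t * nahmH t := by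
  have h0 : nahmG t = ∫ s in Set.Ioc 0 t, nahmH s := by
    rw [nahmG, intervalIntegral.integral_of_le ht.le]
  have h1 : (∫ s in Set.Ioc 0 t, nahmH s) ≤ ∫ _ in Set.Ioc 0 t, nahmH t := by
    apply setIntegral_mono_on
    · exact (intervalIntegrable_iff_integrableOn_Ioc_of_le ht.le).1
        (nahmH_intervalIntegrable le_rfl ht.le)
    · exact integrableOn_const (by simp [Real.volume_Ioc])
    · exact measurableSet_Ioc
    · intro s hs
      exact nahmH_mono hs.1 ht (hs.2)
  have h2 : (∫ _ in Set.Ioc 0 t, nahmH t) = t * nahmH t := by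
    simp [Real.volume_Ioc, ht.le]
  rw [h0]; rw [h2] at h1; exact h1

lemma neg_le_neg_iff_aux {b : ℝ} (hpos : 0 < 1 - b) (hb : 0 < b) (hbh : b ≤ 1/2) :
    -2 * b ≤ -(b / (1 - b)) := by
  have h : b / (1 - b) ≤ 2 * b := by
    rw [div_le_iff₀ hpos]; nlinarith
  linarith

lemma nahmH_lb {s : ℝ} (hs : 1 ≤ s) : -2 * Real.exp (-s) ≤ nahmH s := by
  have hs0 : (0:ℝ) < s := lt_of_lt_of_le one_pos hs
  have hx : Real.exp (-s) ≤ Real.exp (-1) := Real.exp_le_exp.2 (by linarith)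
  have hxhalf : Real.exp (-s) ≤ 1/2 := by
    have : Real.exp (-1) ≤ 1/2 := by
      rw [Real.exp_neg]
      rw [inv_le_comm₀ (Real.exp_pos 1) (by norm_num)]
      have := Real.add_one_le_exp 1
      linarith
    linarith
  have hpos := nahm_pos hs0
  have h1 : 1 - (1 - Real.exp (-s))⁻¹ ≤ nahmH s := Real.one_sub_inv_le_log_of_pos hpos
  have h2 : (1 - Real.exp (-s))⁻¹ ≤ 2 := by
    rw [inv_le_comm₀ hpos (by norm_num)]
    linarith
  have h3 : -2 * Real.exp (-s) ≤ 1 - (1 - Real.exp (-s))⁻¹ := by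
    have hxpos := Real.exp_pos (-s)
    have heq : 1 - (1 - Real.exp (-s))⁻¹ = -(Real.exp (-s) / (1 - Real.exp (-s))) := by
      field_simp
      ring
    rw [heq]
    exact neg_le_neg_iff_aux hpos hxpos hxhalf
  linarith

lemma nahmG_lower {t : ℝ} (ht : 0 ≤ t) : nahmG 1 - 1 ≤ nahmG t := by
  rcases le_total t 1 with h | h
  · have := nahmG_antitoneOn (Set.mem_Ici.2 ht) (Set.mem_Ici.2 one_pos.le) h
    linarith
  · have hsub : nahmG t - nahmG 1 = ∫ s in (1:ℝ)..t, nahmH s := nahmG_sub one_pos.le ht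
    have hcomp : (∫ s in (1:ℝ)..t, -2 * Real.exp (-s)) ≤ ∫ s in (1:ℝ)..t, nahmH s := by
      apply intervalIntegral.integral_mono_on h
      · exact ((continuous_const.mul (Real.continuous_exp.comp continuous_neg))).intervalIntegrable 1 t
      · exact nahmH_intervalIntegrable one_pos.le (le_trans one_pos.le h)
      · intro s hs
        exact nahmH_lb hs.1
    have hval : (∫ s in (1:ℝ)..t, -2 * Real.exp (-s)) = 2 * Real.exp (-t) - 2 * Real.exp (-1) := by
      have : ∀ s ∈ Set.uIcc (1:ℝ) t, HasDerivAt (fun u => 2 * Real.exp (-u)) (-2 * Real.exp (-s)) s := by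
        intro s _
        have h1 : HasDerivAt (fun u : ℝ => -u) (-1) s := (hasDerivAt_id s).neg
        have h2 : HasDerivAt (fun u : ℝ => Real.exp (-u)) (Real.exp (-s) * (-1)) s :=
          (Real.hasDerivAt_exp (-s)).comp s h1
        have := h2.const_mul 2
        rw [show -2 * Real.exp (-s) = 2 * (Real.exp (-s) * (-1)) by ring]
        exact this
      rw [intervalIntegral.integral_eq_sub_of_hasDerivAt this
        ((continuous_const.mul (Real.continuous_exp.comp continuous_neg)).intervalIntegrable 1 t)]
    have hexp : 0 < Real.exp (-t) := Real.exp_pos _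
    have hexp1 : Real.exp (-1) ≤ 1/2 := by
      rw [Real.exp_neg, inv_le_comm₀ (Real.exp_pos 1) (by norm_num)]
      have := Real.add_one_le_exp 1
      linarith
    linarith

lemma nahmH_tendsto_atBot : Tendsto nahmH (nhdsWithin 0 (Set.Ioi 0)) atBot := by
  apply Real.tendsto_log_nhdsGT_zero.comp
  rw [tendsto_nhdsWithin_iff]
  constructor
  · have hc : ContinuousAt (fun t : ℝ => 1 - Real.exp (-t)) 0 :=
      (continuous_const.sub (Real.continuous_exp.comp continuous_neg)).continuousAt
    have := hc.tendsto
    simp only [neg_zero, Real.exp_zero, sub_self] at this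
    exact this.mono_left nhdsWithin_le_nhds
  · filter_upwards [self_mem_nhdsWithin] with t ht
    exact nahm_pos ht


section Quad
open Matrix

variable {N : ℕ} (B : Matrix (Fin N) (Fin N) ℝ)

/-- the quadratic form of `B`. -/
def nahmQ (w : Fin N → ℝ) : ℝ := w ⬝ᵥ (B *ᵥ w)

lemma mulVec_apply (w : Fin N → ℝ) (i : Fin N) : (B *ᵥ w) i = ∑ j, B i j * w j := rfl

lemma nahmQ_single_expand (hsymm : ∀ i j, B j i = B i j) (w : Fin N → ℝ) (t : ℝ) (i : Fin N) :
    nahmQ B (w + t • (Pi.single i 1 : Fin N → ℝ)) =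
      nahmQ B w + 2 * t * ((B *ᵥ w) i) + t ^ 2 * B i i := by
  have h1 : ∀ v : Fin N → ℝ, (t • (Pi.single i 1 : Fin N → ℝ)) ⬝ᵥ v = t * v i := by
    intro v
    rw [smul_dotProduct, single_dotProduct]
    simp [smul_eq_mul]
  have h2 : (B *ᵥ (t • (Pi.single i 1 : Fin N → ℝ))) = fun k => t * B k i := by
    rw [Matrix.mulVec_smul, Matrix.mulVec_single]
    funext k
    simp [smul_eq_mul]
  have h3 : w ⬝ᵥ (fun k => t * B k i) = t * (B *ᵥ w) i := by
    simp only [dotProduct, Matrix.mulVec, Finset.mul_sum]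
    apply Finset.sum_congr rfl
    intro k _
    rw [← hsymm]
    ring
  unfold nahmQ
  rw [Matrix.mulVec_add, dotProduct_add, add_dotProduct, add_dotProduct,
    h2, h3, h1 (B *ᵥ w), h1 (fun k => t * B k i)]
  ring

lemma nahmQ_continuous : Continuous (nahmQ B) := by
  unfold nahmQ
  simp only [dotProduct, Matrix.mulVec]
  apply continuous_finset_sum
  intro i _
  apply (continuous_apply i).mul
  apply continuous_finset_sum
  intro j _
  exact continuous_const.mul (continuous_apply j)

lemma nahmQ_smul (r : ℝ) (v : Fin N → ℝ) : nahmQ B (r • v) = r ^ 2 * nahmQ B v := by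
  unfold nahmQ
  rw [Matrix.mulVec_smul, smul_dotProduct, dotProduct_smul]
  simp [smul_eq_mul]
  ring

lemma nahmQ_pos (hpd : B.PosDef) {v : Fin N → ℝ} (hv : v ≠ 0) : 0 < nahmQ B v := by
  have := hpd.dotProduct_mulVec_pos hv
  simpa [star_trivial, nahmQ] using this

/-- coercivity constant of a positive definite matrix. -/
lemma nahmQ_coercive (hpd : B.PosDef) (hN : 0 < N) :
    ∃ c : ℝ, 0 < c ∧ ∀ w : Fin N → ℝ, c * ‖w‖ ^ 2 ≤ nahmQ B w := by
  haveI : Nonempty (Fin N) := Fin.pos_iff_nonempty.1 hN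
  have hne : (Metric.sphere (0 : Fin N → ℝ) 1).Nonempty := by
    apply NormedSpace.sphere_nonempty.2 zero_le_one
  have hcpt : IsCompact (Metric.sphere (0 : Fin N → ℝ) 1) := isCompact_sphere _ _
  obtain ⟨x₀, hx₀, hmin⟩ := hcpt.exists_isMinOn hne (nahmQ_continuous B).continuousOn
  have hx₀ne : x₀ ≠ 0 := by
    intro h
    rw [h] at hx₀
    simp at hx₀
  refine ⟨nahmQ B x₀, nahmQ_pos B hpd hx₀ne, fun w => ?_⟩
  rcases eq_or_ne w 0 with rfl | hw
  · simp [nahmQ]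
  · have hnw : 0 < ‖w‖ := norm_pos_iff.2 hw
    have hv : (‖w‖⁻¹ • w) ∈ Metric.sphere (0 : Fin N → ℝ) 1 := by
      simp [norm_smul, abs_of_pos (inv_pos.2 hnw), inv_mul_cancel₀ hnw.ne']
    have := hmin hv
    have hQv : nahmQ B x₀ ≤ nahmQ B (‖w‖⁻¹ • w) := this
    have hsc : nahmQ B (‖w‖⁻¹ • w) = (‖w‖⁻¹) ^ 2 * nahmQ B w := nahmQ_smul B _ w
    rw [hsc] at hQv
    have hp : (0:ℝ) < ‖w‖ ^ 2 := pow_pos hnw 2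
    rw [inv_pow] at hQv
    have h2 := mul_le_mul_of_nonneg_right hQv hp.le
    have h3 : (‖w‖ ^ 2)⁻¹ * nahmQ B w * ‖w‖ ^ 2 = nahmQ B w := by
      field_simp
    linarith

end Quad


section Core
open Matrix

variable {N : ℕ}

/-- the objective functional. -/
def nahmF (B : Matrix (Fin N) (Fin N) ℝ) (e : Fin N → ℝ) (w : Fin N → ℝ) : ℝ :=
  (1/2) * nahmQ B w + ∑ i, nahmG (e i * w i) / e i

set_option maxHeartbeats 1000000 in
lemma nahm_exists_w (hN : 0 < N) (B : Matrix (Fin N) (Fin N) ℝ) (hpd : B.PosDef)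
    (e : Fin N → ℝ) (he : ∀ i, 1 ≤ e i) :
    ∃ w : Fin N → ℝ, (∀ i, 0 < w i) ∧ ∀ i, (B *ᵥ w) i + nahmH (e i * w i) = 0 := by
  haveI : Nonempty (Fin N) := Fin.pos_iff_nonempty.1 hN
  have hsymm : ∀ i j, B j i = B i j := fun i j => by
    simpa using hpd.1.apply i j
  have hepos : ∀ i, (0:ℝ) < e i := fun i => lt_of_lt_of_le one_pos (he i)
  set K : Set (Fin N → ℝ) := {w | ∀ i, 0 ≤ w i} with hK
  have hKclosed : IsClosed K := by
    have : K = ⋂ i, (fun w : Fin N → ℝ => w i) ⁻¹' Set.Ici 0 := by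
      ext w; simp [hK]
    rw [this]
    exact isClosed_iInter fun i => isClosed_Ici.preimage (continuous_apply i)
  have hFcont : ContinuousOn (nahmF B e) K := by
    apply ContinuousOn.add
    · exact (continuous_const.mul (nahmQ_continuous B)).continuousOn
    · apply continuousOn_finset_sum
      intro i _
      apply ContinuousOn.div_const
      apply nahmG_continuousOn.comp (continuous_const.mul (continuous_apply i)).continuousOn
      intro w hw
      exact Set.mem_Ici.2 (mul_nonneg (hepos i).le (hw i))
  obtain ⟨c, hc, hcoer⟩ := nahmQ_coercive B hpd hN
  set M0 : ℝ := |nahmG 1| + 1 with hM0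
  have hM0pos : 0 < M0 := by positivity
  have hGlb : ∀ t : ℝ, 0 ≤ t → -M0 ≤ nahmG t := by
    intro t ht
    have := nahmG_lower ht
    have h1 : -(|nahmG 1|) ≤ nahmG 1 := neg_abs_le _
    simp only [hM0]
    linarith
  have hGub : ∀ t : ℝ, 0 ≤ t → nahmG t ≤ 0 := by
    intro t ht
    have := nahmG_antitoneOn (Set.mem_Ici.2 le_rfl) (Set.mem_Ici.2 ht) ht
    rw [nahmG_zero] at this
    exact this
  have hsum_lb : ∀ w ∈ K, -(N * M0) ≤ ∑ i, nahmG (e i * w i) / e i := by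
    intro w hw
    have : ∀ i : Fin N, -M0 ≤ nahmG (e i * w i) / e i := by
      intro i
      have harg : 0 ≤ e i * w i := mul_nonneg (hepos i).le (hw i)
      have h1 : -M0 ≤ nahmG (e i * w i) := hGlb _ harg
      have h2 : nahmG (e i * w i) ≤ 0 := hGub _ harg
      have h3 : nahmG (e i * w i) ≤ nahmG (e i * w i) / e i := by
        rw [le_div_iff₀ (hepos i)]
        nlinarith [he i]
      linarith
    calc -(N * M0) = ∑ _i : Fin N, -M0 := by
          rw [Finset.sum_const, Finset.card_univ, Fintype.card_fin, nsmul_eq_mul]; ring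
      _ ≤ _ := Finset.sum_le_sum fun i _ => this i
  have hFlb : ∀ w ∈ K, (1/2) * (c * ‖w‖^2) - N * M0 ≤ nahmF B e w := by
    intro w hw
    have h1 := hcoer w
    have h2 := hsum_lb w hw
    unfold nahmF
    nlinarith
  set w₀ : Fin N → ℝ := fun _ => 1 with hw₀def
  have hw₀K : w₀ ∈ K := fun i => zero_le_one
  set T : ℝ := max 0 (nahmF B e w₀ + N * M0) with hT
  set R : ℝ := max (‖w₀‖ + 1) (Real.sqrt ((2*T+2)/c)) with hR
  have hRw₀ : ‖w₀‖ + 1 ≤ R := le_max_left _ _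
  have hRpos : 0 < R := lt_of_lt_of_le (by positivity) hRw₀
  have hR2 : (2*T+2)/c ≤ R^2 := by
    have h0 : (0:ℝ) ≤ (2*T+2)/c := by
      apply div_nonneg _ hc.le
      have : (0:ℝ) ≤ T := le_max_left _ _
      linarith
    have h1 : Real.sqrt ((2*T+2)/c) ≤ R := le_max_right _ _
    calc (2*T+2)/c = Real.sqrt ((2*T+2)/c) ^ 2 := (Real.sq_sqrt h0).symm
      _ ≤ R ^ 2 := by
          apply pow_le_pow_left₀ (Real.sqrt_nonneg _) h1
  have hbig : nahmF B e w₀ + N * M0 < (1/2) * (c * R^2) := by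
    have h1 : 2*T+2 ≤ c * R^2 := by
      rw [div_le_iff₀ hc] at hR2
      linarith
    have h2 : nahmF B e w₀ + N * M0 ≤ T := le_max_right _ _
    nlinarith
  have hfar : ∀ u ∈ K, R ≤ ‖u‖ → nahmF B e w₀ < nahmF B e u := by
    intro u hu hR'
    have h1 := hFlb u hu
    have h2 : c * R^2 ≤ c * ‖u‖^2 := by
      apply mul_le_mul_of_nonneg_left _ hc.le
      apply pow_le_pow_left₀ hRpos.le hR'
    nlinarith
  set S : Set (Fin N → ℝ) := K ∩ Metric.closedBall 0 R with hS
  have hScpt : IsCompact S := (isCompact_closedBall (0 : Fin N → ℝ) R).inter_left hKclosed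
  have hw₀S : w₀ ∈ S := by
    constructor
    · exact hw₀K
    · rw [Metric.mem_closedBall, dist_zero_right]
      linarith
  obtain ⟨w, hwS, hmin⟩ := hScpt.exists_isMinOn ⟨w₀, hw₀S⟩ (hFcont.mono Set.inter_subset_left)
  have hwK : w ∈ K := hwS.1
  have hminw₀ : nahmF B e w ≤ nahmF B e w₀ := hmin hw₀S
  have hwlt : ‖w‖ < R := by
    by_contra hcon
    push_neg at hcon
    exact absurd hminw₀ (not_le.2 (hfar w hwK hcon))
  -- the update identity
  have hupdate : ∀ (t : ℝ) (i : Fin N),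
      w + t • (Pi.single i 1 : Fin N → ℝ) = Function.update w i (w i + t) := by
    intro t i
    funext k
    by_cases hk : k = i
    · subst hk; simp
    · simp [hk, Pi.single_eq_of_ne hk, Function.update_of_ne hk]
  have hgsum : ∀ (t : ℝ) (i : Fin N),
      (∑ k, nahmG (e k * (Function.update w i (w i + t)) k) / e k)
        = nahmG (e i * (w i + t)) / e i
          + ∑ k ∈ Finset.univ.erase i, nahmG (e k * w k) / e k := by
    intro t i
    rw [← Finset.add_sum_erase _ _ (Finset.mem_univ i)]
    congr 1
    · simp
    · apply Finset.sum_congr rfl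
      intro k hk
      rw [Function.update_of_ne (Finset.ne_of_mem_erase hk)]
  have hgsum0 : ∀ (i : Fin N),
      (∑ k, nahmG (e k * w k) / e k)
        = nahmG (e i * w i) / e i + ∑ k ∈ Finset.univ.erase i, nahmG (e k * w k) / e k := by
    intro i
    rw [← Finset.add_sum_erase _ _ (Finset.mem_univ i)]
  have hFexp : ∀ (t : ℝ) (i : Fin N),
      nahmF B e (w + t • (Pi.single i 1 : Fin N → ℝ))
        = nahmF B e w + t * ((B *ᵥ w) i) + t^2 * (B i i) / 2
          + (nahmG (e i * (w i + t)) - nahmG (e i * w i)) / e i := by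
    intro t i
    unfold nahmF
    rw [nahmQ_single_expand B hsymm w t i, hupdate t i, hgsum t i]
    rw [hgsum0 i]
    field_simp
    ring
  -- norm bound for perturbations
  have hpert_norm : ∀ (t : ℝ) (i : Fin N), ‖w + t • (Pi.single i 1 : Fin N → ℝ)‖ ≤ ‖w‖ + |t| := by
    intro t i
    have h1 : ‖(Pi.single i 1 : Fin N → ℝ)‖ ≤ 1 := by
      rw [pi_norm_le_iff_of_nonneg zero_le_one]
      intro k
      by_cases hk : k = i
      · subst hk; simp
      · simp [Pi.single_eq_of_ne hk]
    calc ‖w + t • (Pi.single i 1 : Fin N → ℝ)‖ ≤ ‖w‖ + ‖t • (Pi.single i 1 : Fin N → ℝ)‖ :=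
          norm_add_le _ _
      _ ≤ ‖w‖ + |t| := by
          rw [norm_smul, Real.norm_eq_abs]
          nlinarith [abs_nonneg t]
  -- all coordinates positive
  have hwpos : ∀ i, 0 < w i := by
    intro i
    rcases lt_or_eq_of_le (hwK i) with h | h
    · exact h
    -- w i = 0 : derive contradiction
    exfalso
    set L : ℝ := (B *ᵥ w) i with hL
    have htend : Filter.Tendsto (fun t => nahmH (e i * t)) (nhdsWithin 0 (Set.Ioi 0)) Filter.atBot := by
      apply nahmH_tendsto_atBot.comp
      rw [tendsto_nhdsWithin_iff]
      constructor
      · have : Filter.Tendsto (fun t : ℝ => e i * t) (nhds 0) (nhds (e i * 0)) :=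
          (continuous_const.mul continuous_id).tendsto 0
        simp only [mul_zero] at this
        exact this.mono_left nhdsWithin_le_nhds
      · filter_upwards [self_mem_nhdsWithin] with t ht
        exact mul_pos (hepos i) ht
    have hev1 : ∀ᶠ t in nhdsWithin 0 (Set.Ioi 0),
        nahmH (e i * t) < -(L + |B i i|/2) := htend.eventually (Filter.eventually_lt_atBot _)
    have hδ : 0 < min 1 (R - ‖w‖) := lt_min one_pos (by linarith)
    have hev2 : ∀ᶠ t in nhdsWithin 0 (Set.Ioi 0), t < min 1 (R - ‖w‖) :=
      Filter.Eventually.filter_mono nhdsWithin_le_nhds (gt_mem_nhds hδ)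
    have hev3 : ∀ᶠ t in nhdsWithin 0 (Set.Ioi 0), t ∈ Set.Ioi (0:ℝ) := self_mem_nhdsWithin
    obtain ⟨t, ht1, ht2, ht3⟩ := (hev1.and (hev2.and hev3)).exists
    have htpos : 0 < t := ht3
    have ht1' : t < 1 := lt_of_lt_of_le ht2 (min_le_left _ _)
    have htR : t < R - ‖w‖ := lt_of_lt_of_le ht2 (min_le_right _ _)
    set u : Fin N → ℝ := w + t • (Pi.single i 1 : Fin N → ℝ) with hu
    have huK : u ∈ K := by
      intro k
      rw [hu, hupdate t i]
      by_cases hk : k = i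
      · rw [hk]
        simp only [Function.update_self]
        linarith [hwK i, htpos.le]
      · rw [Function.update_of_ne hk]; exact hwK k
    have huS : u ∈ S := by
      refine ⟨huK, ?_⟩
      rw [Metric.mem_closedBall, dist_zero_right, hu]
      have := hpert_norm t i
      rw [abs_of_pos htpos] at this
      linarith
    have hle : nahmF B e w ≤ nahmF B e u := hmin huS
    have hexp := hFexp t i
    have hwi : w i = 0 := h.symm
    rw [hwi, zero_add] at hexp
    have hGle : nahmG (e i * t) ≤ (e i * t) * nahmH (e i * t) :=
      nahmG_le_mul (mul_pos (hepos i) htpos)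
    have hdiv : (nahmG (e i * t) - nahmG (e i * 0)) / e i ≤ t * nahmH (e i * t) := by
      rw [mul_zero, nahmG_zero, sub_zero]
      rw [div_le_iff₀ (hepos i)]
      nlinarith
    have hub : nahmF B e u ≤ nahmF B e w + t * L + t^2 * (B i i)/2 + t * nahmH (e i * t) := by
      rw [hL, hu, hexp]
      linarith
    have hneg : t * L + t^2 * (B i i)/2 + t * nahmH (e i * t) < 0 := by
      have hBa : B i i ≤ |B i i| := le_abs_self _
      have ht2le : t^2 ≤ t := by nlinarith
      have k1 : t^2 * B i i ≤ t^2 * |B i i| := mul_le_mul_of_nonneg_left hBa (sq_nonneg t)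
      have k2 : t^2 * |B i i| ≤ t * |B i i| := mul_le_mul_of_nonneg_right ht2le (abs_nonneg _)
      nlinarith [mul_lt_mul_of_pos_left ht1 htpos, k1, k2]
    linarith
  -- gradient vanishes
  refine ⟨w, hwpos, fun i => ?_⟩
  set L : ℝ := (B *ᵥ w) i with hL
  have hδpos : 0 < min (R - ‖w‖) (w i) := lt_min (by linarith) (hwpos i)
  set δ : ℝ := min (R - ‖w‖) (w i) with hδ
  have hloc : IsLocalMin (fun t : ℝ => nahmF B e (w + t • (Pi.single i 1 : Fin N → ℝ))) 0 := by
    filter_upwards [Metric.ball_mem_nhds (0:ℝ) hδpos] with t ht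
    rw [mem_ball_zero_iff, Real.norm_eq_abs] at ht
    have habs1 : |t| < R - ‖w‖ := lt_of_lt_of_le ht (min_le_left _ _)
    have habs2 : |t| < w i := lt_of_lt_of_le ht (min_le_right _ _)
    have huK : (w + t • (Pi.single i 1 : Fin N → ℝ)) ∈ K := by
      intro k
      rw [hupdate t i]
      by_cases hk : k = i
      · subst hk
        simp only [Function.update_self]
        have := neg_abs_le t
        linarith
      · rw [Function.update_of_ne hk]; exact hwK k
    have huS : (w + t • (Pi.single i 1 : Fin N → ℝ)) ∈ S := by
      refine ⟨huK, ?_⟩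
      rw [Metric.mem_closedBall, dist_zero_right]
      have := hpert_norm t i
      linarith
    simpa using hmin huS
  have hfeq : (fun t : ℝ => nahmF B e (w + t • (Pi.single i 1 : Fin N → ℝ)))
      = fun t => ((nahmF B e w - nahmG (e i * w i) / e i) + (t * L + t^2 * (B i i / 2)))
        + nahmG (e i * w i + e i * t) / e i := by
    funext t
    rw [hFexp t i]
    have harg : e i * (w i + t) = e i * w i + e i * t := by ring
    rw [harg, hL]
    ring
  have hA : HasDerivAt (fun t : ℝ => t * L) L 0 := by
    simpa using (hasDerivAt_id (0:ℝ)).mul_const L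
  have hB2 : HasDerivAt (fun t : ℝ => t^2 * (B i i / 2)) 0 0 := by
    have := (hasDerivAt_pow 2 (0:ℝ)).mul_const (B i i / 2)
    simpa using this
  have harg0 : 0 < e i * w i := mul_pos (hepos i) (hwpos i)
  have hinner : HasDerivAt (fun t : ℝ => e i * w i + e i * t) (e i) 0 := by
    simpa using (((hasDerivAt_id (0:ℝ)).const_mul (e i)).const_add (e i * w i))
  have houter : HasDerivAt nahmG (nahmH (e i * w i)) (e i * w i + e i * 0) := by
    simpa using nahmG_hasDerivAt harg0
  have hcomp : HasDerivAt (fun t : ℝ => nahmG (e i * w i + e i * t))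
      (nahmH (e i * w i) * e i) 0 := houter.comp (h := fun t : ℝ => e i * w i + e i * t) 0 hinner
  have hg : HasDerivAt (fun t : ℝ => nahmG (e i * w i + e i * t) / e i)
      (nahmH (e i * w i)) 0 := by
    have := hcomp.div_const (e i)
    have heq : nahmH (e i * w i) * e i / e i = nahmH (e i * w i) := by
      rw [mul_div_assoc, div_self (hepos i).ne', mul_one]
    rwa [heq] at this
  have hpoly : HasDerivAt
      (fun t : ℝ => (nahmF B e w - nahmG (e i * w i) / e i) + (t * L + t^2 * (B i i / 2)))
      L 0 := by
    have := (hA.add hB2).const_add (nahmF B e w - nahmG (e i * w i) / e i)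
    simpa using this
  have hd : HasDerivAt (fun t : ℝ => nahmF B e (w + t • (Pi.single i 1 : Fin N → ℝ)))
      (L + nahmH (e i * w i)) 0 := by
    rw [hfeq]
    exact hpoly.add hg
  exact hloc.hasDerivAt_eq_zero hd

lemma nahm_unique_w (B : Matrix (Fin N) (Fin N) ℝ) (hpd : B.PosDef)
    (e : Fin N → ℝ) (he : ∀ i, 1 ≤ e i) (w w' : Fin N → ℝ)
    (hw : ∀ i, 0 < w i) (hw' : ∀ i, 0 < w' i)
    (heq : ∀ i, (B *ᵥ w) i + nahmH (e i * w i) = 0)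
    (heq' : ∀ i, (B *ᵥ w') i + nahmH (e i * w' i) = 0) : w = w' := by
  have hepos : ∀ i, (0:ℝ) < e i := fun i => lt_of_lt_of_le one_pos (he i)
  by_contra hne
  have hv : w - w' ≠ 0 := sub_ne_zero.2 hne
  have hQ : 0 < nahmQ B (w - w') := nahmQ_pos B hpd hv
  have key : ∀ i, (w - w') i * ((B *ᵥ (w - w')) i) ≤ 0 := by
    intro i
    have hmv : (B *ᵥ (w - w')) i = (B *ᵥ w) i - (B *ᵥ w') i := by
      rw [Matrix.mulVec_sub]
      rfl
    have h1 : (B *ᵥ w) i = -nahmH (e i * w i) := by linarith [heq i]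
    have h2 : (B *ᵥ w') i = -nahmH (e i * w' i) := by linarith [heq' i]
    have harg1 : e i * w i ∈ Set.Ioi (0:ℝ) := mul_pos (hepos i) (hw i)
    have harg2 : e i * w' i ∈ Set.Ioi (0:ℝ) := mul_pos (hepos i) (hw' i)
    have hvi : (w - w') i = w i - w' i := rfl
    rw [hmv, h1, h2, hvi]
    rcases le_total (w i) (w' i) with hc | hc
    · have hm : nahmH (e i * w i) ≤ nahmH (e i * w' i) :=
        nahmH_mono harg1 harg2 (mul_le_mul_of_nonneg_left hc (hepos i).le)
      nlinarith
    · have hm : nahmH (e i * w' i) ≤ nahmH (e i * w i) :=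
        nahmH_mono harg2 harg1 (mul_le_mul_of_nonneg_left hc (hepos i).le)
      nlinarith
  have hsum : nahmQ B (w - w') ≤ 0 := by
    have : nahmQ B (w - w') = ∑ i, (w - w') i * ((B *ᵥ (w - w')) i) := rfl
    rw [this]
    exact Finset.sum_nonpos fun i _ => key i
  linarith

end Core

end NahmAux

open Finset Matrix in
theorem nahm_equation_unique_solution (N : ℕ) (hN : 0 < N)
    (A : Matrix (Fin N) (Fin N) ℚ) (d : Fin N → ℤ) (hd : ∀ i, 0 < d i)
    (hpd : (Matrix.of fun i j : Fin N => ((A i j : ℝ) * (d j : ℝ))).PosDef) :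
    ∃! z : Fin N → ℝ,
      (∀ i, z i ∈ Set.Ioo (0 : ℝ) 1) ∧
      (∀ i, 1 - z i = ∏ j, (z j) ^ ((A i j : ℝ))) := by
  classical
  set B : Matrix (Fin N) (Fin N) ℝ := Matrix.of fun i j : Fin N => ((A i j : ℝ) * (d j : ℝ)) with hB
  set e : Fin N → ℝ := fun i => (d i : ℝ) with he'
  have he : ∀ i, 1 ≤ e i := by
    intro i
    have h1 : (1:ℤ) ≤ d i := hd i
    show (1:ℝ) ≤ (d i : ℝ)
    exact_mod_cast h1
  have hepos : ∀ i, (0:ℝ) < e i := fun i => lt_of_lt_of_le one_pos (he i)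
  have hmulVec : ∀ (w : Fin N → ℝ) (i : Fin N),
      (B *ᵥ w) i = ∑ j, (A i j : ℝ) * (e j * w j) := by
    intro w i
    rw [mulVec_apply]
    apply Finset.sum_congr rfl
    intro j _
    have hb : B i j = (A i j : ℝ) * e j := rfl
    rw [hb]
    ring
  -- forward: from a w-solution build a z-solution
  have hforward : ∀ w : Fin N → ℝ, (∀ i, 0 < w i) →
      (∀ i, (B *ᵥ w) i + nahmH (e i * w i) = 0) →
      (∀ i, (Real.exp (-(e i * w i))) ∈ Set.Ioo (0:ℝ) 1) ∧
      (∀ i, 1 - Real.exp (-(e i * w i))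
          = ∏ j, (Real.exp (-(e j * w j))) ^ ((A i j : ℝ))) := by
    intro w hwpos hweq
    have hargpos : ∀ i, 0 < e i * w i := fun i => mul_pos (hepos i) (hwpos i)
    constructor
    · intro i
      constructor
      · exact Real.exp_pos _
      · rw [Real.exp_lt_one_iff]
        have := hargpos i
        linarith
    · intro i
      have hpos : 0 < 1 - Real.exp (-(e i * w i)) := nahm_pos (hargpos i)
      have hH : nahmH (e i * w i) = -((B *ᵥ w) i) := by linarith [hweq i]
      have step1 : Real.exp (nahmH (e i * w i)) = 1 - Real.exp (-(e i * w i)) := by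
        unfold nahmH
        exact Real.exp_log hpos
      have step2 : -((B *ᵥ w) i) = ∑ j, (A i j : ℝ) * (-(e j * w j)) := by
        rw [hmulVec w i, ← Finset.sum_neg_distrib]
        apply Finset.sum_congr rfl
        intro j _
        ring
      calc 1 - Real.exp (-(e i * w i)) = Real.exp (nahmH (e i * w i)) := step1.symm
        _ = Real.exp (∑ j, (A i j : ℝ) * (-(e j * w j))) := by rw [hH, step2]
        _ = ∏ j, Real.exp ((A i j : ℝ) * (-(e j * w j))) := Real.exp_sum _ _
        _ = ∏ j, (Real.exp (-(e j * w j))) ^ ((A i j : ℝ)) := by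
            apply Finset.prod_congr rfl
            intro j _
            rw [Real.rpow_def_of_pos (Real.exp_pos _), Real.log_exp, mul_comm]
  -- backward: from a z-solution build a w-solution
  have hbackward : ∀ z : Fin N → ℝ,
      (∀ i, z i ∈ Set.Ioo (0 : ℝ) 1) →
      (∀ i, 1 - z i = ∏ j, (z j) ^ ((A i j : ℝ))) →
      ∃ w : Fin N → ℝ, (∀ i, 0 < w i) ∧
        (∀ i, (B *ᵥ w) i + nahmH (e i * w i) = 0) ∧
        (∀ i, z i = Real.exp (-(e i * w i))) := by
    intro z hz1 hz2
    refine ⟨fun i => -Real.log (z i) / e i, ?_, ?_, ?_⟩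
    case refine_1 =>
      intro i
      apply div_pos _ (hepos i)
      have := Real.log_neg (hz1 i).1 (hz1 i).2
      linarith
    all_goals
      have hiden : ∀ i, e i * (-Real.log (z i) / e i) = -Real.log (z i) := by
        intro i
        rw [← mul_div_assoc, mul_comm, mul_div_assoc, div_self (hepos i).ne', mul_one]
      have hzexp : ∀ i, Real.exp (-(e i * (-Real.log (z i) / e i))) = z i := by
        intro i
        rw [hiden, neg_neg, Real.exp_log (hz1 i).1]
    case refine_2 =>
      intro i
      have hlog : Real.log (1 - z i) = ∑ j, (A i j : ℝ) * Real.log (z j) := by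
        rw [hz2 i, Real.log_prod]
        · apply Finset.sum_congr rfl
          intro j _
          rw [Real.log_rpow (hz1 j).1]
        · intro j _
          exact (Real.rpow_pos_of_pos (hz1 j).1 _).ne'
      have hHval : nahmH (e i * (-Real.log (z i) / e i)) = Real.log (1 - z i) := by
        unfold nahmH
        rw [hzexp i]
      have hBval : (B *ᵥ fun i => -Real.log (z i) / e i) i
          = ∑ j, (A i j : ℝ) * (-Real.log (z j)) := by
        rw [hmulVec]
        apply Finset.sum_congr rfl
        intro j _
        rw [hiden j]
      rw [hBval, hHval, hlog, ← Finset.sum_add_distrib]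
      apply Finset.sum_eq_zero
      intro j _
      ring
    case refine_3 =>
      intro i
      exact (hzexp i).symm
  obtain ⟨w, hwpos, hweq⟩ := nahm_exists_w hN B hpd e he
  obtain ⟨hz1, hz2⟩ := hforward w hwpos hweq
  refine ⟨fun i => Real.exp (-(e i * w i)), ⟨hz1, hz2⟩, ?_⟩
  intro z' hz'
  obtain ⟨w', hw'pos, hw'eq, hz'rep⟩ := hbackward z' hz'.1 hz'.2
  have hww : w' = w := nahm_unique_w B hpd e he w' w hw'pos hwpos hw'eq hweq
  funext i
  rw [hz'rep i, hww]
end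

section
/- Identity of formal power series in x and q: ∑_{n₁,n₂ ≥ 0} q^{(3/2)n₁² + 4n₁n₂ + 4n₂² - (1/2)n₁} x^{n₁+2n₂} / ((q;q)_{n₁}(q²;q²)_{n₂}) = ∑_{n≥0} q^{n²} x^n / (q;q)_n, where (q;q)_n = ∏_{i=1}^n (1-q^i). (Note the exponents (3/2)n₁² - (1/2)n₁ = (3n₁² - n₁)/2 are integers.) -/
open Finset

/-- `(q;q)_n = ∏_{i=1}^n (1 - q^i)`. -/
noncomputable def qFac (q : ℂ) (n : ℕ) : ℂ :=
  ∏ i ∈ Finset.range n, (1 - q ^ (i + 1))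

lemma qFac_succ (q : ℂ) (n : ℕ) : qFac q (n+1) = qFac q n * (1 - q ^ (n+1)) :=
  Finset.prod_range_succ _ _

lemma one_sub_pow_ne (q : ℂ) (hq : ‖q‖ < 1) (n : ℕ) : 1 - q ^ (n+1) ≠ 0 := by
  intro h
  have h1 : q ^ (n+1) = 1 := by linear_combination -h
  have : ‖q ^ (n+1)‖ < 1 := by
    rw [norm_pow]
    exact pow_lt_one₀ (norm_nonneg q) hq (Nat.succ_ne_zero n)
  rw [h1, norm_one] at this
  exact lt_irrefl _ this

lemma qFac_ne_zero (q : ℂ) (hq : ‖q‖ < 1) (n : ℕ) : qFac q n ≠ 0 := by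
  apply Finset.prod_ne_zero_iff.mpr
  intro i _
  exact one_sub_pow_ne q hq i

noncomputable def aQ (q : ℂ) (k : ℕ) : ℂ := q ^ (k*(k-1)/2) / qFac q k

noncomputable def bQ (q : ℂ) (j : ℕ) : ℂ := 1 / qFac (q^2) j

lemma aQ_zero (q : ℂ) : aQ q 0 = 1 := by simp [aQ, qFac]

lemma bQ_zero (q : ℂ) : bQ q 0 = 1 := by simp [bQ, qFac]

lemma tri_succ (k : ℕ) : (k+1)*((k+1)-1)/2 = k + k*(k-1)/2 := by
  rcases k with _ | m
  · rfl
  · simp only [Nat.add_sub_cancel]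
    have h1 : (m+1+1)*(m+1) = (m+1)*m + 2*(m+1) := by ring
    have h3 : (m+1)*m = m*(m+1) := Nat.mul_comm _ _
    have h2 : m*(m+1) % 2 = 0 := by
      have := Nat.even_mul_succ_self m
      rw [Nat.even_iff] at this
      omega
    omega

lemma aQ_rec (q : ℂ) (hq : ‖q‖ < 1) (k : ℕ) :
    aQ q (k+1) * (1 - q ^ (k+1)) = q ^ k * aQ q k := by
  have hne := one_sub_pow_ne q hq k
  have hfac := qFac_ne_zero q hq k
  have hT : q ^ ((k+1)*((k+1)-1)/2) = q ^ k * q ^ (k*(k-1)/2) := by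
    rw [tri_succ, pow_add]
  simp only [aQ, qFac_succ]
  rw [hT]
  field_simp

lemma bQ_rec (q : ℂ) (hq : ‖q‖ < 1) (j : ℕ) :
    bQ q (j+1) * (1 - (q^2) ^ (j+1)) = bQ q j := by
  have hq2 : ‖q ^ 2‖ < 1 := by
    rw [norm_pow]; exact pow_lt_one₀ (norm_nonneg q) hq two_ne_zero
  have hne := one_sub_pow_ne (q^2) hq2 j
  have hfac := qFac_ne_zero (q^2) hq2 j
  simp only [bQ, qFac_succ]
  field_simp

noncomputable def pQ (q : ℂ) (n : ℕ) : ℂ :=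
  ∑ j ∈ Finset.range (n/2+1), aQ q (n-2*j) * bQ q j

noncomputable def sQ (q : ℂ) (n : ℕ) : ℂ :=
  ∑ j ∈ Finset.range (n/2+1), q ^ (n-2*j) * aQ q (n-2*j) * bQ q j

lemma sQ_zero (q : ℂ) : sQ q 0 = 1 := by simp [sQ, aQ_zero, bQ_zero]
lemma pQ_zero (q : ℂ) : pQ q 0 = 1 := by simp [pQ, aQ_zero, bQ_zero]

lemma sp (q : ℂ) (hq : ‖q‖ < 1) (n : ℕ) : sQ q (n+1) + sQ q n = pQ q (n+1) := by
  rcases Nat.even_or_odd n with ⟨m, hm⟩ | ⟨m, hm⟩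
  · -- n = 2m, n+1 = 2m+1 odd; all ranges are range (m+1)
    subst hm
    have e1 : (m + m + 1)/2 + 1 = m + 1 := by omega
    have e2 : (m + m)/2 + 1 = m + 1 := by omega
    simp only [sQ, pQ, e1, e2, ← Finset.sum_add_distrib]
    apply Finset.sum_congr rfl
    intro j hj
    rw [Finset.mem_range] at hj
    have hk1 : m + m + 1 - 2*j = (m + m - 2*j) + 1 := by omega
    rw [hk1]
    linear_combination (-(bQ q j)) * aQ_rec q hq (m + m - 2*j)
  · -- n = 2m+1, n+1 = 2m+2 even
    subst hm
    have e1 : (2*m+1+1)/2 + 1 = (m+1) + 1 := by omega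
    have e2 : (2*m+1)/2 + 1 = m + 1 := by omega
    simp only [sQ, pQ, e1, e2]
    rw [Finset.sum_range_succ (fun j => q ^ (2*m+1+1-2*j) * aQ q (2*m+1+1-2*j) * bQ q j) (m+1),
        Finset.sum_range_succ (fun j => aQ q (2*m+1+1-2*j) * bQ q j) (m+1)]
    have hz : 2*m+1+1-2*(m+1) = 0 := by omega
    rw [hz]
    simp only [pow_zero, one_mul]
    rw [add_right_comm, ← Finset.sum_add_distrib]
    congr 1
    apply Finset.sum_congr rfl
    intro j hj
    rw [Finset.mem_range] at hj
    have hk1 : 2*m+1+1-2*j = (2*m+1-2*j) + 1 := by omega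
    rw [hk1]
    linear_combination (-(bQ q j)) * aQ_rec q hq (2*m+1-2*j)

lemma split_term (q : ℂ) (hq : ‖q‖ < 1) (k j : ℕ) :
    aQ q (k+1) * bQ q j * (1 - q ^ (k+1+2*j)) =
      q ^ k * aQ q k * bQ q j + q ^ (k+1) * aQ q (k+1) * ((1 - q ^ (2*j)) * bQ q j) := by
  have h := aQ_rec q hq k
  rw [pow_add, pow_add]
  linear_combination (bQ q j) * h

lemma bQ_rec' (q : ℂ) (hq : ‖q‖ < 1) (j : ℕ) :
    (1 - q ^ (2*(j+1))) * bQ q (j+1) = bQ q j := by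
  have h := bQ_rec q hq j
  rw [← pow_mul] at h
  linear_combination h

lemma p_rec (q : ℂ) (hq : ‖q‖ < 1) (n : ℕ) : pQ q (n+1) * (1 - q ^ (n+1)) = pQ q n := by
  rcases n with _ | n
  · -- n = 0
    simp only [pQ, pQ_zero]
    norm_num
    have h := aQ_rec q hq 0
    simpa [aQ_zero, bQ_zero] using h
  rcases Nat.even_or_odd n with ⟨t, ht⟩ | ⟨t, ht⟩
  · -- n = 2t, proving pQ(2t+2)*(1-q^(2t+2)) = pQ(2t+1)
    subst ht
    have e1 : (t + t + 1 + 1)/2 + 1 = (t+1) + 1 := by omega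
    have key : ∀ j ∈ Finset.range (t+1),
        aQ q (t+t+1+1-2*j) * bQ q j * (1 - q ^ (t+t+1+1)) =
        q ^ (t+t+1-2*j) * aQ q (t+t+1-2*j) * bQ q j
          + q ^ ((t+t+1-2*j)+1) * aQ q ((t+t+1-2*j)+1) * ((1 - q ^ (2*j)) * bQ q j) := by
      intro j hj
      rw [Finset.mem_range] at hj
      have h1 : t+t+1+1-2*j = (t+t+1-2*j)+1 := by omega
      have h2 : t+t+1+1 = ((t+t+1-2*j)+1) + 2*j := by omega
      rw [h1, h2]
      exact split_term q hq (t+t+1-2*j) j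
    have expand : pQ q (t+t+1+1) * (1 - q ^ (t+t+1+1)) =
        (∑ j ∈ Finset.range (t+1),
          (q ^ (t+t+1-2*j) * aQ q (t+t+1-2*j) * bQ q j
            + q ^ ((t+t+1-2*j)+1) * aQ q ((t+t+1-2*j)+1) * ((1 - q ^ (2*j)) * bQ q j)))
          + bQ q t := by
      rw [pQ, e1, Finset.sum_mul, Finset.sum_range_succ]
      rw [Finset.sum_congr rfl key]
      congr 1
      have hz : t+t+1+1-2*(t+1) = 0 := by omega
      rw [hz, aQ_zero, one_mul]
      have h2 : t+t+1+1 = 2*(t+1) := by omega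
      rw [h2, mul_comm]
      exact bQ_rec' q hq t
    rw [expand, Finset.sum_add_distrib]
    have hS1 : ∑ j ∈ Finset.range (t+1), q ^ (t+t+1-2*j) * aQ q (t+t+1-2*j) * bQ q j
        = sQ q (t+t+1) := by
      rw [sQ, show (t+t+1)/2+1 = t+1 from by omega]
    have hS2 : ∑ j ∈ Finset.range (t+1),
        q ^ ((t+t+1-2*j)+1) * aQ q ((t+t+1-2*j)+1) * ((1 - q ^ (2*j)) * bQ q j)
        + bQ q t = sQ q (t+t) := by
      rw [Finset.sum_range_succ']
      have hg0 : q ^ ((t+t+1-2*0)+1) * aQ q ((t+t+1-2*0)+1) * ((1 - q ^ (2*0)) * bQ q 0) = 0 := by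
        norm_num
      rw [hg0, add_zero]
      have hcong : ∀ j ∈ Finset.range t,
          q ^ ((t+t+1-2*(j+1))+1) * aQ q ((t+t+1-2*(j+1))+1) * ((1 - q ^ (2*(j+1))) * bQ q (j+1))
          = q ^ (t+t-2*(j+1)+2) * aQ q (t+t-2*(j+1)+2) * bQ q j := by
        intro j hj
        rw [Finset.mem_range] at hj
        have h1 : (t+t+1-2*(j+1))+1 = t+t-2*(j+1)+2 := by omega
        rw [h1, bQ_rec' q hq j]
      rw [Finset.sum_congr rfl hcong]
      rw [sQ, show (t+t)/2 + 1 = t + 1 from by omega, Finset.sum_range_succ]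
      congr 1
      · apply Finset.sum_congr rfl
        intro j hj
        rw [Finset.mem_range] at hj
        have h1 : t+t-2*(j+1)+2 = t+t-2*j := by omega
        rw [h1]
      · have h1 : t+t-2*t = 0 := by omega
        rw [h1, aQ_zero]
        norm_num
    linear_combination hS1 + hS2 + sp q hq (t+t)
  · -- n = 2t+1, proving pQ(2t+3)*(1-q^(2t+3)) = pQ(2t+2)
    subst ht
    have e1 : (2*t+1+1+1)/2 + 1 = (t+1) + 1 := by omega
    have key : ∀ j ∈ Finset.range (t+2),
        aQ q (2*t+1+1+1-2*j) * bQ q j * (1 - q ^ (2*t+1+1+1)) =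
        q ^ (2*t+1+1-2*j) * aQ q (2*t+1+1-2*j) * bQ q j
          + q ^ ((2*t+1+1-2*j)+1) * aQ q ((2*t+1+1-2*j)+1) * ((1 - q ^ (2*j)) * bQ q j) := by
      intro j hj
      rw [Finset.mem_range] at hj
      have h1 : 2*t+1+1+1-2*j = (2*t+1+1-2*j)+1 := by omega
      have h2 : 2*t+1+1+1 = ((2*t+1+1-2*j)+1) + 2*j := by omega
      rw [h1, h2]
      exact split_term q hq (2*t+1+1-2*j) j
    have expand : pQ q (2*t+1+1+1) * (1 - q ^ (2*t+1+1+1)) =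
        ∑ j ∈ Finset.range (t+2),
          (q ^ (2*t+1+1-2*j) * aQ q (2*t+1+1-2*j) * bQ q j
            + q ^ ((2*t+1+1-2*j)+1) * aQ q ((2*t+1+1-2*j)+1) * ((1 - q ^ (2*j)) * bQ q j)) := by
      rw [pQ, e1, Finset.sum_mul]
      exact Finset.sum_congr rfl key
    rw [expand, Finset.sum_add_distrib]
    have hS1 : ∑ j ∈ Finset.range (t+2), q ^ (2*t+1+1-2*j) * aQ q (2*t+1+1-2*j) * bQ q j
        = sQ q (2*t+1+1) := by
      rw [sQ, show (2*t+1+1)/2+1 = t+2 from by omega]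
    have hS2 : ∑ j ∈ Finset.range (t+2),
        q ^ ((2*t+1+1-2*j)+1) * aQ q ((2*t+1+1-2*j)+1) * ((1 - q ^ (2*j)) * bQ q j)
        = sQ q (2*t+1) := by
      rw [Finset.sum_range_succ']
      have hg0 : q ^ ((2*t+1+1-2*0)+1) * aQ q ((2*t+1+1-2*0)+1) * ((1 - q ^ (2*0)) * bQ q 0) = 0 := by
        norm_num
      rw [hg0, add_zero]
      have hcong : ∀ j ∈ Finset.range (t+1),
          q ^ ((2*t+1+1-2*(j+1))+1) * aQ q ((2*t+1+1-2*(j+1))+1) * ((1 - q ^ (2*(j+1))) * bQ q (j+1))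
          = q ^ (2*t+1-2*j) * aQ q (2*t+1-2*j) * bQ q j := by
        intro j hj
        rw [Finset.mem_range] at hj
        have h1 : (2*t+1+1-2*(j+1))+1 = 2*t+1-2*j := by omega
        rw [h1, bQ_rec' q hq j]
      rw [Finset.sum_congr rfl hcong, sQ, show (2*t+1)/2+1 = t+1 from by omega]
    linear_combination hS1 + hS2 + sp q hq (2*t+1)

lemma pQ_eq (q : ℂ) (hq : ‖q‖ < 1) (n : ℕ) : pQ q n = 1 / qFac q n := by
  induction n with
  | zero => simp [pQ_zero, qFac]
  | succ n ih =>
    have h := p_rec q hq n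
    rw [ih] at h
    have hne := one_sub_pow_ne q hq n
    have hfac := qFac_ne_zero q hq n
    rw [qFac_succ]
    field_simp at h ⊢
    linear_combination h

lemma even_sq_sub (k : ℕ) : (k^2 - k) % 2 = 0 := by
  induction k with
  | zero => rfl
  | succ n ih =>
    have h0 : n ≤ n^2 := Nat.le_self_pow two_ne_zero n
    have h : (n+1)^2 = n^2 + 2*n + 1 := by ring
    omega

lemma norm_qFac_ge (q : ℂ) (hq : ‖q‖ < 1) (n : ℕ) : (1-‖q‖)^n ≤ ‖qFac q n‖ := by
  induction n with
  | zero => simp [qFac]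
  | succ n ih =>
    rw [qFac_succ, norm_mul, pow_succ]
    have h1 : ‖q ^ (n+1)‖ ≤ ‖q‖ := by
      rw [norm_pow]
      exact pow_le_of_le_one (norm_nonneg q) (le_of_lt hq) (Nat.succ_ne_zero n)
    have h2 : 1 - ‖q‖ ≤ ‖1 - q ^ (n+1)‖ := by
      have h3 := norm_sub_norm_le (1:ℂ) (q ^ (n+1))
      rw [norm_one] at h3
      linarith
    exact mul_le_mul ih h2 (by linarith) (norm_nonneg _)

lemma summable_sq_geom (r M : ℝ) (hr0 : 0 ≤ r) (hr1 : r < 1) (hM : 0 ≤ M) :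
    Summable (fun n : ℕ => r ^ (n^2) * M ^ n) := by
  apply summable_of_ratio_norm_eventually_le (r := 1/2) (by norm_num)
  have h2 : Filter.Tendsto (fun n : ℕ => r * M * (r^2) ^ n) Filter.atTop (nhds 0) := by
    have ht := tendsto_pow_atTop_nhds_zero_of_lt_one (by positivity : (0:ℝ) ≤ r^2)
      (by nlinarith : r^2 < 1)
    simpa using ht.const_mul (r*M)
  filter_upwards [h2.eventually_le_const (by norm_num : (0:ℝ) < 1/2)] with n hn
  have key : r ^ ((n+1)^2) * M ^ (n+1) = (r ^ (n^2) * M ^ n) * (r * M * (r^2) ^ n) := by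
    have e : (n+1)^2 = n^2 + (2*n + 1) := by ring
    rw [e, pow_add, ← pow_mul]
    ring
  rw [Real.norm_eq_abs, Real.norm_eq_abs, key,
      abs_of_nonneg (by positivity), abs_of_nonneg (by positivity)]
  have hfn : 0 ≤ r ^ (n^2) * M ^ n := by positivity
  calc r ^ (n^2) * M ^ n * (r * M * (r^2) ^ n) ≤ r ^ (n^2) * M ^ n * (1/2) := by
        apply mul_le_mul_of_nonneg_left hn hfn
    _ = 1/2 * (r ^ (n^2) * M ^ n) := by ring

set_option maxHeartbeats 1600000 in
theorem double_sum_RR_x (q x : ℂ) (hq : ‖q‖ < 1) :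
    ∑' n : ℕ × ℕ,
        q ^ ((3 * n.1 ^ 2 - n.1) / 2 + 4 * n.1 * n.2 + 4 * n.2 ^ 2) * x ^ (n.1 + 2 * n.2) /
          (qFac q n.1 * qFac (q ^ 2) n.2) =
      ∑' n : ℕ, q ^ (n ^ 2) * x ^ n / qFac q n := by
  have hr0 : (0:ℝ) ≤ ‖q‖ := norm_nonneg q
  have hc : (0:ℝ) < 1 - ‖q‖ := by linarith
  have hq2 : ‖q^2‖ < 1 := by
    rw [norm_pow]; exact pow_lt_one₀ hr0 hq two_ne_zero
  set F : ℕ × ℕ → ℂ := fun p =>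
    q ^ ((3 * p.1 ^ 2 - p.1) / 2 + 4 * p.1 * p.2 + 4 * p.2 ^ 2) * x ^ (p.1 + 2 * p.2) /
      (qFac q p.1 * qFac (q ^ 2) p.2) with hF
  -- Summability of F
  set M : ℝ := ‖x‖ / (1 - ‖q‖) with hM
  have hM0 : 0 ≤ M := by positivity
  have hg := summable_sq_geom ‖q‖ M hr0 hq hM0
  have hh := summable_sq_geom (‖q‖^4) (M^2) (by positivity)
    (pow_lt_one₀ hr0 hq (by norm_num)) (by positivity)
  have hprod : Summable (fun p : ℕ×ℕ =>
      (‖q‖ ^ (p.1^2) * M ^ p.1) * ((‖q‖^4) ^ (p.2^2) * (M^2) ^ p.2)) :=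
    hg.mul_of_nonneg hh (fun n => by positivity) (fun n => by positivity)
  have hFnorm : ∀ p : ℕ×ℕ, ‖F p‖ ≤
      (‖q‖ ^ (p.1^2) * M ^ p.1) * ((‖q‖^4) ^ (p.2^2) * (M^2) ^ p.2) := by
    rintro ⟨a, b⟩
    have hE1 : a^2 + 4*b^2 ≤ (3 * a ^ 2 - a) / 2 + 4 * a * b + 4 * b ^ 2 := by
      have h1 : a ≤ a^2 := Nat.le_self_pow two_ne_zero a
      omega
    have hnum : ‖q‖ ^ ((3 * a ^ 2 - a) / 2 + 4 * a * b + 4 * b ^ 2) * ‖x‖ ^ (a + 2*b)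
        ≤ ‖q‖ ^ (a^2 + 4*b^2) * ‖x‖ ^ (a + 2*b) := by
      apply mul_le_mul_of_nonneg_right _ (by positivity)
      exact pow_le_pow_of_le_one hr0 (le_of_lt hq) hE1
    have hden : (1-‖q‖) ^ a * (1-‖q‖) ^ b ≤ ‖qFac q a‖ * ‖qFac (q^2) b‖ := by
      apply mul_le_mul (norm_qFac_ge q hq a) _ (by positivity) (norm_nonneg _)
      calc (1-‖q‖) ^ b ≤ (1-‖q^2‖) ^ b := by
            apply pow_le_pow_left₀ (by linarith)
            rw [norm_pow]
            nlinarith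
        _ ≤ ‖qFac (q^2) b‖ := norm_qFac_ge (q^2) hq2 b
    have hden0 : (0:ℝ) < (1-‖q‖) ^ a * (1-‖q‖) ^ b := by positivity
    have step1 : ‖F (a, b)‖ ≤ ‖q‖ ^ (a^2 + 4*b^2) * ‖x‖ ^ (a + 2*b) /
        ((1-‖q‖) ^ a * (1-‖q‖) ^ b) := by
      rw [hF]
      simp only [norm_div, norm_mul, norm_pow]
      exact div_le_div₀ (by positivity) hnum hden0 hden
    have step2 : ‖q‖ ^ (a^2 + 4*b^2) * ‖x‖ ^ (a + 2*b) / ((1-‖q‖) ^ a * (1-‖q‖) ^ b)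
        ≤ ‖q‖ ^ (a^2 + 4*b^2) * ‖x‖ ^ (a + 2*b) / (1-‖q‖) ^ (a + 2*b) := by
      apply div_le_div₀ (by positivity) le_rfl (by positivity)
      rw [← pow_add]
      exact pow_le_pow_of_le_one (by linarith) (by linarith) (by omega)
    have step3 : ‖q‖ ^ (a^2 + 4*b^2) * ‖x‖ ^ (a + 2*b) / (1-‖q‖) ^ (a + 2*b)
        = (‖q‖ ^ (a^2) * M ^ a) * ((‖q‖^4) ^ (b^2) * (M^2) ^ b) := by
      rw [hM]
      generalize (1 : ℝ) - ‖q‖ = c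
      ring
    calc ‖F (a,b)‖ ≤ _ := step1
      _ ≤ _ := step2
      _ = _ := step3
  have hFsummable : Summable F :=
    Summable.of_norm (Summable.of_nonneg_of_le (fun p => norm_nonneg (F p)) hFnorm hprod)
  -- Reindexing along n = n₁ + 2 n₂
  set φ : ℕ×ℕ → ℕ×ℕ := fun p => (p.1 + 2*p.2, p.2) with hφdef
  have hφ : Function.Injective φ := by
    rintro ⟨a,b⟩ ⟨c,d⟩ h
    rw [hφdef, Prod.ext_iff] at h
    simp only at h
    have : a = c ∧ b = d := by omega
    simp [this.1, this.2]
  set G : ℕ×ℕ → ℂ := fun p => if 2*p.2 ≤ p.1 then F (p.1 - 2*p.2, p.2) else 0 with hG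
  have hGφ : ∀ p, G (φ p) = F p := by
    rintro ⟨a, b⟩
    rw [hG, hφdef]
    simp only
    rw [if_pos (by omega)]
    have h1 : a + 2*b - 2*b = a := by omega
    rw [h1]
  have hsupp : ∀ p ∉ Set.range φ, G p = 0 := by
    rintro ⟨n, j⟩ hp
    by_cases hle : 2*j ≤ n
    · refine absurd ⟨(n - 2*j, j), ?_⟩ hp
      rw [hφdef]
      simp only [Prod.mk.injEq]
      constructor
      · omega
      · trivial
    · rw [hG]; simp only; rw [if_neg hle]
  have hsupp' : Function.support G ⊆ Set.range φ := by
    intro p hp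
    by_contra hr
    exact hp (hsupp p hr)
  have hGF : G ∘ φ = F := funext hGφ
  have hGsum : Summable G := (hφ.summable_iff hsupp).mp (hGF ▸ hFsummable)
  have h1 : ∑' p, F p = ∑' p, G p := by
    rw [← hφ.tsum_eq hsupp']
    exact tsum_congr fun p => (hGφ p).symm
  have h3 : ∀ n : ℕ, ∑' j : ℕ, G (n, j) = q ^ (n^2) * x ^ n / qFac q n := by
    intro n
    rw [tsum_eq_sum (s := Finset.range (n/2+1))
      (by intro j hj
          rw [Finset.mem_range] at hj
          rw [hG]; simp only; rw [if_neg (by omega)])]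
    have hterm : ∀ j ∈ Finset.range (n/2+1),
        G (n, j) = q ^ (n^2) * x ^ n * (aQ q (n-2*j) * bQ q j) := by
      intro j hj
      rw [Finset.mem_range] at hj
      rw [hG]
      simp only
      rw [if_pos (by omega), hF]
      simp only
      have hx : n - 2*j + 2*j = n := by omega
      have hE : (3 * (n-2*j) ^ 2 - (n-2*j)) / 2 + 4 * (n-2*j) * j + 4 * j ^ 2
          = n^2 + (n-2*j)*((n-2*j)-1)/2 := by
        set k := n - 2*j with hk
        have h1 : k ≤ k^2 := Nat.le_self_pow two_ne_zero k
        have h2 : (k^2 - k) % 2 = 0 := even_sq_sub k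
        have h4 : k*(k-1) = k^2 - k := by
          rcases k with _ | m
          · rfl
          · have : (m+1)^2 = (m+1)*m + (m+1) := by ring
            simp only [Nat.add_sub_cancel]
            omega
        have h3 : n^2 = k^2 + 4*k*j + 4*j^2 := by
          rw [show n = k + 2*j from by omega]; ring
        omega
      rw [hE, hx, pow_add, aQ, bQ]
      ring
    rw [Finset.sum_congr rfl hterm, ← Finset.mul_sum, ← pQ, pQ_eq q hq n, mul_one_div]
  calc ∑' p : ℕ×ℕ, F p = ∑' p, G p := h1
    _ = ∑' (n : ℕ) (j : ℕ), G (n, j) := Summable.tsum_prod' hGsum hGsum.prod_factor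
    _ = ∑' n : ℕ, q ^ (n^2) * x ^ n / qFac q n := tsum_congr h3
end

section
/- Let F be a field, and Z(F) the free abelian group on ℙ¹(F) = F ∪ {∞}. Define d: Z(F) → ∧²F^× by [X] ↦ X ∧ (1−X) for X ≠ 0, 1, ∞ and [0], [1], [∞] ↦ 0. Then every five-term element [X] − [Y] + [Y/X] − [(1−X^{-1})/(1−Y^{-1})] + [(1−X)/(1−Y)] (for X, Y ∈ F with X, Y, X/Y, (1−X)/(1−Y), (1−X^{-1})/(1−Y^{-1}) all defined and ∉ {0,1}) lies in the kernel A(F) of d. -/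
/-- The image `X ∧ (1 - X)` of `[X]` under `d : Z(F) → ∧² F^×`, for `X ∉ {0, 1}`,
    in the exterior algebra over ℤ of the multiplicative group `Fˣ` (written additively). -/
noncomputable def dWedge {F : Type*} [Field F] (X : F) (hX0 : X ≠ 0) (hX1 : X ≠ 1) :
    ExteriorAlgebra ℤ (Additive Fˣ) :=
  ExteriorAlgebra.ι ℤ (Additive.ofMul (Units.mk0 X hX0)) *
    ExteriorAlgebra.ι ℤ (Additive.ofMul (Units.mk0 (1 - X) (sub_ne_zero.mpr hX1.symm)))

section Aux
variable {F : Type*} [Field F]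

noncomputable def fLog (x : F) (hx : x ≠ 0) : ExteriorAlgebra ℤ (Additive Fˣ) :=
  ExteriorAlgebra.ι ℤ (Additive.ofMul (Units.mk0 x hx))

lemma fLog_congr {x y : F} (hx : x ≠ 0) (h : x = y) :
    fLog x hx = fLog y (h ▸ hx) := by subst h; rfl

lemma fLog_mul (x y : F) (hx : x ≠ 0) (hy : y ≠ 0) :
    fLog (x * y) (mul_ne_zero hx hy) = fLog x hx + fLog y hy := by
  unfold fLog
  rw [← map_add, ← ofMul_mul, ← Units.mk0_mul]

lemma fLog_div (x y : F) (hx : x ≠ 0) (hy : y ≠ 0) :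
    fLog (x / y) (div_ne_zero hx hy) = fLog x hx - fLog y hy := by
  unfold fLog
  rw [← map_sub, ← ofMul_div]
  exact congrArg _ (congrArg _ (Units.ext (by simp)))

lemma dWedge_eq (X : F) (hX0 : X ≠ 0) (hX1 : X ≠ 1) :
    dWedge X hX0 hX1 = fLog X hX0 * fLog (1 - X) (sub_ne_zero.mpr hX1.symm) := rfl

end Aux

theorem five_term_in_kernel {F : Type*} [Field F] (X Y : F)
    (hX0 : X ≠ 0) (hX1 : X ≠ 1) (hY0 : Y ≠ 0) (hY1 : Y ≠ 1)
    (h10 : Y / X ≠ 0) (h11 : Y / X ≠ 1)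
    (h20 : (1 - X⁻¹) / (1 - Y⁻¹) ≠ 0) (h21 : (1 - X⁻¹) / (1 - Y⁻¹) ≠ 1)
    (h30 : (1 - X) / (1 - Y) ≠ 0) (h31 : (1 - X) / (1 - Y) ≠ 1) :
    dWedge X hX0 hX1 - dWedge Y hY0 hY1 + dWedge (Y / X) h10 h11 -
      dWedge ((1 - X⁻¹) / (1 - Y⁻¹)) h20 h21 +
      dWedge ((1 - X) / (1 - Y)) h30 h31 = 0 := by
  have h1X : (1 : F) - X ≠ 0 := sub_ne_zero.mpr hX1.symm
  have h1Y : (1 : F) - Y ≠ 0 := sub_ne_zero.mpr hY1.symm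
  have hXY : X - Y ≠ 0 := by
    intro h
    exact h11 (by rw [sub_eq_zero.mp h, div_self hY0])
  have h1Y' : (1 : F) - Y⁻¹ ≠ 0 := fun h => h20 (by rw [h, div_zero])
  set a := fLog X hX0 with ha
  set b := fLog (1 - X) h1X with hb
  set c := fLog Y hY0 with hc
  set d := fLog (1 - Y) h1Y with hd
  set e := fLog (X - Y) hXY with he
  have e1 : dWedge X hX0 hX1 = a * b := rfl
  have e2 : dWedge Y hY0 hY1 = c * d := rfl
  have e3 : dWedge (Y / X) h10 h11 = (c - a) * (e - a) := by
    rw [dWedge_eq]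
    congr 1
    · rw [← fLog_div Y X hY0 hX0]
    · rw [← fLog_div (X - Y) X hXY hX0]
      exact fLog_congr _ (by field_simp)
  have e4 : dWedge ((1 - X⁻¹) / (1 - Y⁻¹)) h20 h21 = (b + c - (a + d)) * (e - (a + d)) := by
    rw [dWedge_eq]
    congr 1
    · rw [← fLog_mul (1 - X) Y h1X hY0, ← fLog_mul X (1 - Y) hX0 h1Y,
        ← fLog_div _ _ (mul_ne_zero h1X hY0) (mul_ne_zero hX0 h1Y)]
      refine fLog_congr _ ?_
      rw [div_eq_div_iff h1Y' (mul_ne_zero hX0 h1Y)]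
      field_simp
      ring
    · rw [← fLog_mul X (1 - Y) hX0 h1Y, ← fLog_div _ _ hXY (mul_ne_zero hX0 h1Y)]
      refine fLog_congr _ ?_
      have hY1' : Y - 1 ≠ 0 := sub_ne_zero.mpr hY1
      have hX1' : X - 1 ≠ 0 := sub_ne_zero.mpr hX1
      have hx1 : (1 : F) - X⁻¹ = (X - 1) / X := by field_simp
      have hy1 : (1 : F) - Y⁻¹ = (Y - 1) / Y := by field_simp
      have key2 : (X - 1) / X / ((Y - 1) / Y) = ((X - 1) * Y) / (X * (Y - 1)) := by
        rw [div_div_div_comm, div_div_eq_mul_div, div_mul_eq_mul_div, div_div, mul_comm (Y - 1) X]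
      rw [hx1, hy1, key2, one_sub_div (mul_ne_zero hX0 hY1'),
        div_eq_div_iff (mul_ne_zero hX0 hY1') (mul_ne_zero hX0 h1Y)]
      ring
  have e5 : dWedge ((1 - X) / (1 - Y)) h30 h31 = (b - d) * (e - d) := by
    rw [dWedge_eq]
    congr 1
    · rw [← fLog_div _ _ h1X h1Y]
    · rw [← fLog_div _ _ hXY h1Y]
      exact fLog_congr _ (by field_simp; ring)
  rw [e1, e2, e3, e4, e5]
  have key : a * b - c * d + (c - a) * (e - a) - (b + c - (a + d)) * (e - (a + d)) +
      (b - d) * (e - d) = (a * b + b * a) - (a * d + d * a) := by noncomm_ring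
  have hab : a * b + b * a = 0 := ExteriorAlgebra.ι_add_mul_swap _ _
  have had : a * d + d * a = 0 := ExteriorAlgebra.ι_add_mul_swap _ _
  rw [key, hab, had, sub_zero]
end
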